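/- arXiv:1009.5656 — 5 statements merged into one kernel-verified Lean document; each statement's English description precedes it below -/
import Mathlib

section
/- Let α : (0,∞) → (0,∞) be an orientation-preserving diffeomorphism fixing 0 and ∞ with log α' bounded and α' slowly oscillating at 0 and ∞. Then the function D(t) := α(t)/t is slowly oscillating at 0 and ∞. -/
open Filter Set

noncomputable def osc {E : Type*} [NormedAddCommGroup E] (f : ℝ → E) (a b : ℝ) : ℝ :=
  sSup {d | ∃ t ∈ Set.Icc a b, ∃ τ ∈ Set.Icc a b, d = ‖f t - f τ‖}

theorem quotient_slowly_oscillating (α α' : ℝ → ℝ)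
    (hbij : Set.BijOn α (Set.Ioi 0) (Set.Ioi 0))
    (hmono : StrictMonoOn α (Set.Ioi 0))
    (hderiv : ∀ t ∈ Set.Ioi (0:ℝ), HasDerivAt α (α' t) t)
    (h0 : Tendsto α (nhdsWithin 0 (Set.Ioi 0)) (nhds 0))
    (hinf : Tendsto α atTop atTop)
    (hlog_bdd : ∃ C, ∀ t ∈ Set.Ioi (0:ℝ), |Real.log (α' t)| ≤ C)
    (hso0 : Tendsto (fun r => osc α' (r / 2) r) (nhdsWithin 0 (Set.Ioi 0)) (nhds 0))
    (hsoinf : Tendsto (fun r => osc α' (r / 2) r) atTop (nhds 0)) :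
    Tendsto (fun r => osc (fun t => α t / t) (r / 2) r) (nhdsWithin 0 (Set.Ioi 0)) (nhds 0) ∧
    Tendsto (fun r => osc (fun t => α t / t) (r / 2) r) atTop (nhds 0) := by
  obtain ⟨C, hC⟩ := hlog_bdd
  set K := Real.exp C with hKdef
  have hKpos : 0 < K := Real.exp_pos C
  -- α is positive on (0,∞)
  have hαpos : ∀ t ∈ Ioi (0:ℝ), 0 < α t := fun t ht => hbij.mapsTo ht
  -- α' is nonnegative on (0,∞)
  have h'nonneg : ∀ t ∈ Ioi (0:ℝ), 0 ≤ α' t := by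
    intro t ht
    have hslope : Tendsto (slope α t) (nhdsWithin t {t}ᶜ) (nhds (α' t)) :=
      hasDerivAt_iff_tendsto_slope.mp (hderiv t ht)
    have hsub : Ioi t ⊆ {t}ᶜ := fun s hs => ne_of_gt hs
    have hslope' : Tendsto (slope α t) (nhdsWithin t (Ioi t)) (nhds (α' t)) :=
      hslope.mono_left (nhdsWithin_mono t hsub)
    refine ge_of_tendsto hslope' (eventually_nhdsWithin_of_forall fun s hs => ?_)
    have hs' : t < s := hs
    have hαlt : α t < α s := hmono ht (lt_trans ht hs') hs'
    rw [slope_def_field]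
    exact div_nonneg (by linarith) (by linarith)
  -- α' is bounded above by K
  have h'le : ∀ t ∈ Ioi (0:ℝ), α' t ≤ K := by
    intro t ht
    rcases eq_or_lt_of_le (h'nonneg t ht) with h | h
    · rw [← h]; exact hKpos.le
    · rw [← Real.exp_log h]
      exact Real.exp_le_exp.mpr ((abs_le.mp (hC t ht)).2)
  -- mean value theorem
  have mvt : ∀ a b : ℝ, 0 < a → a < b → ∃ ξ ∈ Ioo a b, α' ξ = (α b - α a) / (b - a) := by
    intro a b ha hab
    refine exists_hasDerivAt_eq_slope α α' hab ?_ ?_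
    · intro x hx
      exact (hderiv x (lt_of_lt_of_le ha hx.1)).continuousAt.continuousWithinAt
    · intro x hx
      exact hderiv x (lt_trans ha hx.1)
  -- the quotient D t = α t / t is bounded by K
  have hDle : ∀ t ∈ Ioi (0:ℝ), α t / t ≤ K := by
    intro t ht
    have ht' : (0:ℝ) < t := ht
    rw [div_le_iff₀ ht']
    have hev : ∀ᶠ s in nhdsWithin (0:ℝ) (Ioi 0), α t ≤ α s + K * t := by
      filter_upwards [self_mem_nhdsWithin,
        (eventually_lt_nhds ht').filter_mono nhdsWithin_le_nhds] with s hs0 hst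
      have hs0' : (0:ℝ) < s := hs0
      obtain ⟨ξ, hξ, hξeq⟩ := mvt s t hs0' hst
      have hts : t - s ≠ 0 := by linarith
      have h1 : α t - α s = α' ξ * (t - s) := by
        rw [hξeq, div_mul_cancel₀ _ hts]
      have hξpos : (0:ℝ) < ξ := lt_trans hs0' hξ.1
      have h2 : α' ξ * (t - s) ≤ K * t := by
        apply mul_le_mul (h'le ξ hξpos) (by linarith) (by linarith) hKpos.le
      linarith
    have hlim : Tendsto (fun s => α s + K * t) (nhdsWithin (0:ℝ) (Ioi 0))
        (nhds (0 + K * t)) := h0.add tendsto_const_nhds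
    have := ge_of_tendsto hlim hev
    linarith
  have hDnn : ∀ t ∈ Ioi (0:ℝ), 0 ≤ α t / t := fun t ht =>
    div_nonneg (hαpos t ht).le (le_of_lt ht)
  -- osc of α' facts
  have hbdd : ∀ r : ℝ, 0 < r →
      BddAbove {d | ∃ t ∈ Icc (r/2) r, ∃ τ ∈ Icc (r/2) r, d = ‖α' t - α' τ‖} := by
    intro r hr
    refine ⟨2*K, ?_⟩
    rintro x ⟨t, ht, τ, hτ, rfl⟩
    have htp : t ∈ Ioi (0:ℝ) := lt_of_lt_of_le (by linarith) ht.1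
    have hτp : τ ∈ Ioi (0:ℝ) := lt_of_lt_of_le (by linarith) hτ.1
    have h1 := h'nonneg t htp; have h2 := h'le t htp
    have h3 := h'nonneg τ hτp; have h4 := h'le τ hτp
    rw [Real.norm_eq_abs, abs_sub_le_iff]
    constructor <;> linarith
  have hωle : ∀ r : ℝ, 0 < r → ∀ t ∈ Icc (r/2) r, ∀ τ ∈ Icc (r/2) r,
      |α' t - α' τ| ≤ osc α' (r/2) r := by
    intro r hr t ht τ hτ
    exact le_csSup (hbdd r hr) ⟨t, ht, τ, hτ, (Real.norm_eq_abs _).symm⟩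
  have hωnn : ∀ r : ℝ, 0 ≤ osc α' (r/2) r := by
    intro r
    apply Real.sSup_nonneg
    rintro x ⟨t, ht, τ, hτ, rfl⟩
    exact norm_nonneg _
  -- e t := |α t / t - α' t|
  set e : ℝ → ℝ := fun t => |α t / t - α' t| with hedef
  have hebd : ∀ t ∈ Ioi (0:ℝ), e t ≤ 2*K := by
    intro t ht
    have h1 := hDle t ht; have h2 := hDnn t ht
    have h3 := h'nonneg t ht; have h4 := h'le t ht
    rw [hedef]
    rw [abs_sub_le_iff]
    constructor <;> linarith
  -- key recursion: e t ≤ e (t/2)/2 + osc α' (t/2) t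
  have hrec : ∀ t ∈ Ioi (0:ℝ), e t ≤ e (t/2) / 2 + osc α' (t/2) t := by
    intro t ht
    have ht' : (0:ℝ) < t := ht
    have ht2 : (0:ℝ) < t/2 := by linarith
    obtain ⟨ξ, hξ, hξeq⟩ := mvt (t/2) t ht2 (by linarith)
    have hαt : α t = α (t/2) + (t/2) * α' ξ := by
      have h2 : t - t/2 = t/2 := by ring
      rw [hξeq, h2, mul_div_cancel₀ _ (ne_of_gt ht2)]; ring
    have hid : α t / t - α' t =
        ((α (t/2)/(t/2) - α' (t/2)) + (α' (t/2) - α' t) + (α' ξ - α' t)) / 2 := by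
      rw [hαt]; field_simp; ring
    have hmem1 : t/2 ∈ Icc (t/2) t := ⟨le_refl _, by linarith⟩
    have hmem2 : t ∈ Icc (t/2) t := ⟨by linarith, le_refl _⟩
    have hmem3 : ξ ∈ Icc (t/2) t := ⟨hξ.1.le, hξ.2.le⟩
    have hb1 : |α' (t/2) - α' t| ≤ osc α' (t/2) t := by
      have := hωle t ht' (t/2) (by simpa using hmem1) t (by simpa using hmem2)
      simpa using this
    have hb2 : |α' ξ - α' t| ≤ osc α' (t/2) t := by
      have := hωle t ht' ξ (by simpa using hmem3) t (by simpa using hmem2)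
      simpa using this
    calc e t = |((α (t/2)/(t/2) - α' (t/2)) + (α' (t/2) - α' t) + (α' ξ - α' t))| / 2 := by
          rw [hedef]; simp only []; rw [hid, abs_div]; norm_num
      _ ≤ (|α (t/2)/(t/2) - α' (t/2)| + |α' (t/2) - α' t| + |α' ξ - α' t|) / 2 := by
          have := abs_add_le ((α (t/2)/(t/2) - α' (t/2)) + (α' (t/2) - α' t)) (α' ξ - α' t)
          have h2 := abs_add_le (α (t/2)/(t/2) - α' (t/2)) (α' (t/2) - α' t)
          linarith
      _ ≤ e (t/2) / 2 + osc α' (t/2) t := by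
          rw [hedef]; simp only []
          linarith
  -- iterated bound near 0
  have key0 : ∀ n : ℕ, ∀ t : ℝ, 0 < t → ∀ B : ℝ,
      (∀ s ∈ Ioc (0:ℝ) t, osc α' (s/2) s ≤ B) → e t ≤ 2*K*(1/2:ℝ)^n + 2*B := by
    intro n
    induction n with
    | zero =>
      intro t ht B hB
      have hBnn : 0 ≤ B := le_trans (hωnn t) (hB t ⟨ht, le_refl t⟩)
      have := hebd t ht
      simp only [pow_zero]
      linarith
    | succ n ih =>
      intro t ht B hB
      have ht2 : (0:ℝ) < t/2 := by linarith
      have h1 := ih (t/2) ht2 B (fun s hs => hB s ⟨hs.1, hs.2.trans (by linarith)⟩)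
      have h2 := hrec t ht
      have h3 := hB t ⟨ht, le_refl t⟩
      have hp : (1/2:ℝ)^(n+1) = (1/2:ℝ)^n / 2 := by ring
      rw [hp]
      linarith
  have lim0 : ∀ t : ℝ, 0 < t → ∀ B : ℝ,
      (∀ s ∈ Ioc (0:ℝ) t, osc α' (s/2) s ≤ B) → e t ≤ 2*B := by
    intro t ht B hB
    have hlim : Tendsto (fun n : ℕ => 2*K*(1/2:ℝ)^n + 2*B) atTop (nhds (2*K*0 + 2*B)) :=
      (Tendsto.const_mul (2*K)
        (tendsto_pow_atTop_nhds_zero_of_lt_one (by norm_num) (by norm_num))).add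
        tendsto_const_nhds
    have := ge_of_tendsto hlim (Eventually.of_forall fun n => key0 n t ht B hB)
    linarith
  -- iterated bound near ∞
  have keyI : ∀ n : ℕ, ∀ T B : ℝ, 0 < T →
      (∀ s : ℝ, T ≤ s → osc α' (s/2) s ≤ B) →
      ∀ t : ℝ, T * 2^n ≤ t → e t ≤ 2*K*(1/2:ℝ)^n + 2*B := by
    intro n
    induction n with
    | zero =>
      intro T B hT hB t htT
      simp only [pow_zero, mul_one] at htT
      have ht : 0 < t := lt_of_lt_of_le hT htT
      have hBnn : 0 ≤ B := le_trans (hωnn t) (hB t htT)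
      have := hebd t ht
      simp only [pow_zero]
      linarith
    | succ n ih =>
      intro T B hT hB t htT
      have hpow : (2:ℝ)^(n+1) = 2^n * 2 := pow_succ 2 n
      have hppos : (0:ℝ) < 2^n := by positivity
      have ht : 0 < t := lt_of_lt_of_le (by nlinarith) htT
      have ht2 : T * 2^n ≤ t/2 := by
        rw [hpow] at htT; linarith
      have h1 := ih T B hT hB (t/2) ht2
      have h2 := hrec t ht
      have h1n : (1:ℝ) ≤ 2^n := one_le_pow₀ (by norm_num)
      have hTt : T ≤ t := by nlinarith
      have h3 := hB t hTt
      have hp : (1/2:ℝ)^(n+1) = (1/2:ℝ)^n / 2 := by ring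
      rw [hp]
      linarith
  -- osc of D bound
  have hoscDnn : ∀ r : ℝ, 0 ≤ osc (fun t => α t / t) (r/2) r := by
    intro r
    apply Real.sSup_nonneg
    rintro x ⟨t, ht, τ, hτ, rfl⟩
    exact norm_nonneg _
  have final : ∀ r : ℝ, 0 < r → ∀ E : ℝ, 0 ≤ E →
      (∀ t ∈ Icc (r/2) r, e t ≤ E) →
      osc (fun t => α t / t) (r/2) r ≤ osc α' (r/2) r + 2*E := by
    intro r hr E hE hEb
    apply Real.sSup_le
    · rintro x ⟨t, ht, τ, hτ, rfl⟩
      have h1 := hEb t ht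
      have h2 := hEb τ hτ
      have h3 := hωle r hr t ht τ hτ
      rw [hedef] at h1 h2
      simp only [Real.norm_eq_abs]
      have habs : |α t / t - α τ / τ| ≤
          |α t / t - α' t| + |α' t - α' τ| + |α' τ - α τ / τ| := by
        have e1 := abs_add_le ((α t / t - α' t) + (α' t - α' τ)) (α' τ - α τ / τ)
        have e2 := abs_add_le (α t / t - α' t) (α' t - α' τ)
        have e3 : α t / t - α τ / τ =
            ((α t / t - α' t) + (α' t - α' τ)) + (α' τ - α τ / τ) := by ring
        rw [e3]
        linarith
      have h2' : |α' τ - α τ / τ| ≤ E := by rw [abs_sub_comm]; exact h2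
      linarith
    · linarith [hωnn r]
  constructor
  · -- at 0
    rw [Metric.tendsto_nhdsWithin_nhds]
    intro ε hε
    obtain ⟨δ, hδ, hδ'⟩ := Metric.tendsto_nhdsWithin_nhds.mp hso0 (ε/8) (by linarith)
    refine ⟨δ, hδ, ?_⟩
    intro r hr hrd
    have hr' : (0:ℝ) < r := hr
    rw [Real.dist_eq, sub_zero, abs_of_pos hr'] at hrd
    have hωsmall : ∀ s ∈ Ioc (0:ℝ) r, osc α' (s/2) s ≤ ε/8 := by
      intro s hs
      have hsδ : dist s 0 < δ := by
        rw [Real.dist_eq, sub_zero, abs_of_pos hs.1]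
        linarith [hs.2]
      have := hδ' (show s ∈ Ioi (0:ℝ) from hs.1) hsδ
      rw [Real.dist_eq, sub_zero] at this
      exact (le_abs_self _).trans this.le
    have hE : ∀ t ∈ Icc (r/2) r, e t ≤ 2*(ε/8) := by
      intro t ht
      have htp : 0 < t := lt_of_lt_of_le (by linarith) ht.1
      exact lim0 t htp (ε/8) (fun s hs => hωsmall s ⟨hs.1, hs.2.trans ht.2⟩)
    have hfin := final r hr' (2*(ε/8)) (by linarith) hE
    have hωr := hωsmall r ⟨hr', le_refl r⟩
    rw [Real.dist_eq, sub_zero, abs_of_nonneg (hoscDnn r)]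
    linarith
  · -- at ∞
    rw [Metric.tendsto_atTop]
    intro ε hε
    obtain ⟨T0, hT0⟩ := Metric.tendsto_atTop.mp hsoinf (ε/8) (by linarith)
    set T := max T0 1 with hTdef
    have hT : (0:ℝ) < T := lt_of_lt_of_le one_pos (le_max_right _ _)
    have hωs : ∀ s : ℝ, T ≤ s → osc α' (s/2) s ≤ ε/8 := by
      intro s hs
      have := hT0 s ((le_max_left _ _).trans hs)
      rw [Real.dist_eq, sub_zero] at this
      exact (le_abs_self _).trans this.le
    obtain ⟨n, hn⟩ : ∃ n : ℕ, 2*K*(1/2:ℝ)^n < ε/8 := by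
      have hlim : Tendsto (fun n : ℕ => 2*K*(1/2:ℝ)^n) atTop (nhds 0) := by
        have := (Tendsto.const_mul (2*K)
          (tendsto_pow_atTop_nhds_zero_of_lt_one (r := (1/2:ℝ)) (by norm_num) (by norm_num)))
        simpa using this
      exact (hlim.eventually (gt_mem_nhds (show (0:ℝ) < ε/8 by linarith))).exists
    refine ⟨T * 2^(n+1), ?_⟩
    intro r hr
    have hppos : (0:ℝ) < 2^(n+1) := by positivity
    have hrpos : 0 < r := lt_of_lt_of_le (by positivity) hr
    have hpow : (2:ℝ)^(n+1) = 2^n * 2 := pow_succ 2 n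
    have hE : ∀ t ∈ Icc (r/2) r, e t ≤ 2*K*(1/2:ℝ)^n + 2*(ε/8) := by
      intro t ht
      apply keyI n T (ε/8) hT hωs t
      have := ht.1
      rw [hpow] at hr
      linarith
    have hEnn : (0:ℝ) ≤ 2*K*(1/2:ℝ)^n + 2*(ε/8) := by positivity
    have hfin := final r hrpos _ hEnn hE
    have hTr : T ≤ r := by nlinarith [hppos, (show (1:ℝ) ≤ 2^(n+1) from one_le_pow₀ (by norm_num : (1:ℝ) ≤ 2))]
    have hωr := hωs r hTr
    rw [Real.dist_eq, sub_zero, abs_of_nonneg (hoscDnn r)]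
    linarith
end

section
/- An orientation-preserving diffeomorphism α of (0,∞) onto itself fixing only 0 and ∞ is a slowly oscillating shift (i.e., log α' is bounded and α' is slowly oscillating) if and only if α(t) = t·e^{ω(t)} for some real-valued C¹ function ω that is slowly oscillating, such that t ↦ t·ω'(t) is slowly oscillating and inf_{t>0}(1 + t·ω'(t)) > 0. -/
open Filter Set

/-- Bounded continuous slowly oscillating (at `0` and `∞`) function on `(0,∞)`. -/
def SO {E : Type*} [NormedAddCommGroup E] (f : ℝ → E) : Prop :=
  ContinuousOn f (Set.Ioi 0) ∧ (∃ C, ∀ t ∈ Set.Ioi (0:ℝ), ‖f t‖ ≤ C) ∧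
  ∀ l ∈ Set.Ioo (0:ℝ) 1,
    Tendsto (fun r => osc f (l * r) r) (nhdsWithin 0 (Set.Ioi 0)) (nhds 0) ∧
    Tendsto (fun r => osc f (l * r) r) atTop (nhds 0)


lemma osc_nonneg {E : Type*} [NormedAddCommGroup E] (f : ℝ → E) (a b : ℝ) : 0 ≤ osc f a b := by
  apply Real.sSup_nonneg
  rintro x ⟨t, ht, τ, hτ, rfl⟩
  exact norm_nonneg _

lemma osc_le {E : Type*} [NormedAddCommGroup E] {f : ℝ → E} {a b d : ℝ} (hd : 0 ≤ d)
    (h : ∀ t ∈ Set.Icc a b, ∀ τ ∈ Set.Icc a b, ‖f t - f τ‖ ≤ d) : osc f a b ≤ d := by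
  apply Real.sSup_le _ hd
  rintro x ⟨t, ht, τ, hτ, rfl⟩
  exact h t ht τ hτ

lemma norm_sub_le_osc {E : Type*} [NormedAddCommGroup E] {f : ℝ → E} {a b M : ℝ}
    (hM : ∀ u ∈ Set.Icc a b, ‖f u‖ ≤ M) {t τ : ℝ} (ht : t ∈ Set.Icc a b)
    (hτ : τ ∈ Set.Icc a b) : ‖f t - f τ‖ ≤ osc f a b := by
  apply le_csSup
  · refine ⟨2 * M, ?_⟩
    rintro x ⟨u, hu, v, hv, rfl⟩
    calc ‖f u - f v‖ ≤ ‖f u‖ + ‖f v‖ := norm_sub_le _ _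
    _ ≤ 2 * M := by have := hM u hu; have := hM v hv; linarith
  · exact ⟨t, ht, τ, hτ, rfl⟩

lemma exp_lip {a b C : ℝ} (ha : a ≤ C) (hb : b ≤ C) :
    |Real.exp a - Real.exp b| ≤ Real.exp C * |a - b| := by
  wlog h : b ≤ a generalizing a b
  · rw [abs_sub_comm, abs_sub_comm a b]; exact this hb ha (le_of_not_ge h)
  rw [abs_of_nonneg (by linarith : (0:ℝ) ≤ a - b), abs_of_nonneg (sub_nonneg.2 (Real.exp_le_exp.2 h))]
  have h1 : Real.exp a - Real.exp b = Real.exp b * (Real.exp (a - b) - 1) := by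
    rw [mul_sub, ← Real.exp_add]; ring_nf
  rw [h1]
  have h2 : Real.exp (a - b) - 1 ≤ (a - b) * Real.exp (a - b) := by
    have key : 1 - (a - b) ≤ Real.exp (-(a - b)) := by
      have := Real.add_one_le_exp (-(a - b)); linarith
    have hpos := Real.exp_pos (a - b)
    have hmul := mul_le_mul_of_nonneg_left key hpos.le
    rw [← Real.exp_add] at hmul
    simp at hmul
    nlinarith
  calc Real.exp b * (Real.exp (a-b) - 1) ≤ Real.exp b * ((a-b) * Real.exp (a-b)) := by
        apply mul_le_mul_of_nonneg_left h2 (Real.exp_pos b).le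
  _ = Real.exp a * (a - b) := by
        rw [show Real.exp b * ((a-b) * Real.exp (a-b)) = Real.exp b * Real.exp (a-b) * (a-b) by ring,
          ← Real.exp_add]; ring_nf
  _ ≤ Real.exp C * (a - b) := by
        apply mul_le_mul_of_nonneg_right (Real.exp_le_exp.2 ha) (by linarith)

lemma chain_bound {α' : ℝ → ℝ} {M : ℝ} (hM : ∀ u ∈ Set.Ioi (0:ℝ), |α' u| ≤ M)
    {s₀ t ε : ℝ} (hs₀ : 0 < s₀) (hst : s₀ ≤ t) (hε : 0 ≤ ε)
    (hosc : ∀ r, s₀ ≤ r → r ≤ t → osc α' (r/2) r ≤ ε) :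
    ∀ s ∈ Set.Icc s₀ t, |α' s - α' t| ≤ ε * ((Real.log t - Real.log s) / Real.log 2 + 1) := by
  have ht : 0 < t := hs₀.trans_le hst
  have hM' : ∀ a b : ℝ, 0 < a → ∀ u ∈ Set.Icc a b, ‖α' u‖ ≤ M := by
    intro a b ha u hu
    rw [Real.norm_eq_abs]
    exact hM u (lt_of_lt_of_le ha hu.1)
  have aux : ∀ k : ℕ, ∀ s : ℝ, s₀ ≤ s → t / 2 ^ (k + 1) ≤ s → s ≤ t / 2 ^ k →
      |α' s - α' t| ≤ (k + 1 : ℕ) * ε := by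
    intro k
    induction k with
    | zero =>
      intro s hs0 h1 h2
      simp only [zero_add, pow_one, pow_zero, div_one] at h1 h2
      have hstep : |α' s - α' t| ≤ osc α' (t / 2) t := by
        have := norm_sub_le_osc (f := α') (M := M) (hM' (t/2) t (by positivity))
          (t := s) (τ := t) ⟨h1, h2⟩ ⟨by linarith, le_refl t⟩
        simpa [Real.norm_eq_abs] using this
      calc |α' s - α' t| ≤ ε := hstep.trans (hosc t hst le_rfl)
      _ = (0 + 1 : ℕ) * ε := by simp
    | succ k ih =>
      intro s hs0 h1 h2
      set r : ℝ := t / 2 ^ (k + 1) with hr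
      have hrpos : 0 < r := by positivity
      have hsr : s₀ ≤ r := hs0.trans h2
      have hrt : r ≤ t := by
        rw [hr]
        apply div_le_self ht.le
        calc (1:ℝ) = 1 ^ (k+1) := (one_pow _).symm
        _ ≤ 2 ^ (k+1) := by gcongr; norm_num
      have hr2 : r / 2 = t / 2 ^ (k + 2) := by
        rw [hr]; ring
      have hstep : |α' s - α' r| ≤ ε := by
        have hmem : s ∈ Set.Icc (r/2) r := ⟨by rw [hr2]; exact h1, h2⟩
        have := norm_sub_le_osc (f := α') (M := M) (hM' (r/2) r (by positivity))
          hmem ⟨by linarith, le_refl r⟩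
        rw [Real.norm_eq_abs] at this
        exact this.trans (hosc r hsr hrt)
      have htail : |α' r - α' t| ≤ (k + 1 : ℕ) * ε :=
        ih r hsr le_rfl (by rw [hr]; gcongr <;> norm_num)
      calc |α' s - α' t| ≤ |α' s - α' r| + |α' r - α' t| := abs_sub_le _ _ _
      _ ≤ ε + (k + 1 : ℕ) * ε := add_le_add hstep htail
      _ = (k + 1 + 1 : ℕ) * ε := by push_cast; ring
  intro s hs
  have hs0 : 0 < s := hs₀.trans_le hs.1
  have hts1 : 1 ≤ t / s := (one_le_div hs0).2 hs.2
  set L : ℝ := Real.logb 2 (t / s) with hL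
  have hL0 : 0 ≤ L := Real.logb_nonneg one_lt_two hts1
  set k : ℕ := ⌊L⌋₊ with hk
  have hk1 : (k : ℝ) ≤ L := Nat.floor_le hL0
  have hk2 : L < k + 1 := Nat.lt_floor_add_one L
  have hpow1 : (2:ℝ) ^ k ≤ t / s := by
    have h1 : (2:ℝ) ^ (k:ℝ) ≤ (2:ℝ) ^ L := Real.rpow_le_rpow_of_exponent_le one_le_two hk1
    rw [Real.rpow_natCast] at h1
    rwa [hL, Real.rpow_logb two_pos (by norm_num) (by positivity)] at h1
  have hpow2 : t / s < (2:ℝ) ^ (k + 1) := by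
    have h1 : (2:ℝ) ^ L < (2:ℝ) ^ ((k:ℝ) + 1) := Real.rpow_lt_rpow_of_exponent_lt one_lt_two hk2
    rw [hL, Real.rpow_logb two_pos (by norm_num) (by positivity)] at h1
    calc t / s < (2:ℝ) ^ ((k:ℝ) + 1) := h1
    _ = (2:ℝ) ^ (k + 1) := by rw [← Real.rpow_natCast 2 (k+1)]; congr 1; push_cast; ring
  have hb1 : t / 2 ^ (k + 1) ≤ s := by
    rw [div_le_iff₀ (by positivity)]
    rw [div_lt_iff₀ hs0] at hpow2
    nlinarith
  have hb2 : s ≤ t / 2 ^ k := by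
    rw [le_div_iff₀ (by positivity)]
    rw [le_div_iff₀ hs0] at hpow1
    nlinarith
  have := aux k s hs.1 hb1 hb2
  have hkL : ((k : ℕ) + 1 : ℕ) * ε ≤ ε * ((Real.log t - Real.log s) / Real.log 2 + 1) := by
    have hlogb : L = (Real.log t - Real.log s) / Real.log 2 := by
      rw [hL, Real.logb, Real.log_div (by positivity) (by positivity)]
    push_cast
    rw [← hlogb]
    nlinarith
  exact this.trans hkL

lemma ftc_bound {α α' : ℝ → ℝ} (hderiv : ∀ u ∈ Set.Ioi (0:ℝ), HasDerivAt α (α' u) u)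
    (hcont : ContinuousOn α' (Set.Ioi 0)) {M : ℝ} (hM : ∀ u ∈ Set.Ioi (0:ℝ), |α' u| ≤ M)
    {s₀ t ε : ℝ} (hs₀ : 0 < s₀) (hst : s₀ ≤ t) (hε : 0 ≤ ε)
    (hosc : ∀ r, s₀ ≤ r → r ≤ t → osc α' (r/2) r ≤ ε) :
    |α t - α s₀ - (t - s₀) * α' t| ≤ ε * (1 + (Real.log 2)⁻¹) * t := by
  have ht : 0 < t := hs₀.trans_le hst
  have hIcc : Set.Icc s₀ t ⊆ Set.Ioi (0:ℝ) := fun u hu => hs₀.trans_le hu.1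
  have huIcc : Set.uIcc s₀ t = Set.Icc s₀ t := Set.uIcc_of_le hst
  have hint1 : IntervalIntegrable α' MeasureTheory.volume s₀ t := by
    apply ContinuousOn.intervalIntegrable
    rw [huIcc]; exact hcont.mono hIcc
  have hftc : α t - α s₀ = ∫ u in s₀..t, α' u := by
    rw [intervalIntegral.integral_eq_sub_of_hasDerivAt (fun u hu => hderiv u (hIcc (huIcc ▸ hu))) hint1]
  have hconst : (t - s₀) * α' t = ∫ _u in s₀..t, α' t := by
    rw [intervalIntegral.integral_const, smul_eq_mul]
  have key : α t - α s₀ - (t - s₀) * α' t = ∫ u in s₀..t, (α' u - α' t) := by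
    rw [hftc, hconst, intervalIntegral.integral_sub hint1 intervalIntegrable_const]
  set B : ℝ → ℝ := fun u => ε * ((Real.log t - Real.log u) / Real.log 2 + 1) with hB
  have hBcont : ContinuousOn B (Set.Icc s₀ t) := by
    apply ContinuousOn.mul continuousOn_const
    apply ContinuousOn.add _ continuousOn_const
    apply ContinuousOn.div_const
    apply ContinuousOn.sub continuousOn_const
    exact Real.continuousOn_log.mono (fun u hu => ne_of_gt (hIcc hu))
  have hBint : IntervalIntegrable B MeasureTheory.volume s₀ t := by
    apply ContinuousOn.intervalIntegrable; rw [huIcc]; exact hBcont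
  have hbound : ∀ u ∈ Set.uIoc s₀ t, ‖α' u - α' t‖ ≤ B u := by
    intro u hu
    rw [Set.uIoc_of_le hst] at hu
    rw [Real.norm_eq_abs]
    exact chain_bound hM hs₀ hst hε hosc u ⟨hu.1.le, hu.2⟩
  have habs : |∫ u in s₀..t, (α' u - α' t)| ≤ |∫ u in s₀..t, B u| := by
    have := intervalIntegral.norm_integral_le_abs_of_norm_le (μ := MeasureTheory.volume)
      (f := fun u => α' u - α' t) (a := s₀) (b := t)
      (MeasureTheory.ae_restrict_of_forall_mem measurableSet_uIoc hbound) hBint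
    simpa [Real.norm_eq_abs] using this
  have hlogint : ∫ u in s₀..t, Real.log u = t * Real.log t - s₀ * Real.log s₀ - t + s₀ :=
    integral_log
  have hBval : ∫ u in s₀..t, B u =
      ε * (((t - s₀) * Real.log t - (t * Real.log t - s₀ * Real.log s₀ - t + s₀)) / Real.log 2
        + (t - s₀)) := by
    rw [hB]
    rw [intervalIntegral.integral_const_mul]
    congr 1
    have : ∀ u, (Real.log t - Real.log u) / Real.log 2 + 1
        = (Real.log 2)⁻¹ * (Real.log t - Real.log u) + 1 := by
      intro u; rw [div_eq_inv_mul]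
    simp_rw [this]
    rw [intervalIntegral.integral_add, intervalIntegral.integral_const_mul,
      intervalIntegral.integral_sub, hlogint, intervalIntegral.integral_const,
      intervalIntegral.integral_const]
    · field_simp; simp only [smul_eq_mul, mul_one]
    · exact intervalIntegrable_const
    · apply ContinuousOn.intervalIntegrable
      rw [huIcc]
      exact Real.continuousOn_log.mono (fun u hu => ne_of_gt (hIcc hu))
    · apply IntervalIntegrable.const_mul
      apply ContinuousOn.intervalIntegrable
      rw [huIcc]
      apply ContinuousOn.sub continuousOn_const
      exact Real.continuousOn_log.mono (fun u hu => ne_of_gt (hIcc hu))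
    · exact intervalIntegrable_const
  have hlog2 : 0 < Real.log 2 := Real.log_pos one_lt_two
  have hfinal : |∫ u in s₀..t, B u| ≤ ε * (1 + (Real.log 2)⁻¹) * t := by
    rw [hBval]
    have hlogmono : Real.log s₀ ≤ Real.log t := Real.log_le_log hs₀ hst
    have h1 : (t - s₀) * Real.log t - (t * Real.log t - s₀ * Real.log s₀ - t + s₀)
        = t - s₀ - s₀ * (Real.log t - Real.log s₀) := by ring
    have h2 : 0 ≤ s₀ * (Real.log t - Real.log s₀) := by
      apply mul_nonneg hs₀.le; linarith
    have hnum : (t - s₀) * Real.log t - (t * Real.log t - s₀ * Real.log s₀ - t + s₀) ≤ t := by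
      rw [h1]; linarith
    have hnum0 : 0 ≤ (t - s₀) * Real.log t - (t * Real.log t - s₀ * Real.log s₀ - t + s₀) := by
      rw [h1]
      have hlx : Real.log (t / s₀) ≤ t / s₀ - 1 := Real.log_le_sub_one_of_pos (by positivity)
      rw [Real.log_div (ne_of_gt ht) (ne_of_gt hs₀)] at hlx
      have : s₀ * (Real.log t - Real.log s₀) ≤ s₀ * (t / s₀ - 1) :=
        mul_le_mul_of_nonneg_left hlx hs₀.le
      have h3 : s₀ * (t / s₀ - 1) = t - s₀ := by field_simp
      linarith
    set X : ℝ := (t - s₀) * Real.log t - (t * Real.log t - s₀ * Real.log s₀ - t + s₀) with hX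
    have hnn : 0 ≤ ε * (X / Real.log 2 + (t - s₀)) :=
      mul_nonneg hε (add_nonneg (div_nonneg hnum0 hlog2.le) (by linarith))
    rw [abs_of_nonneg hnn]
    calc ε * (X / Real.log 2 + (t - s₀)) ≤ ε * (t / Real.log 2 + t) := by
          apply mul_le_mul_of_nonneg_left _ hε
          apply add_le_add _ (by linarith)
          exact div_le_div_of_nonneg_right hnum hlog2.le
    _ = ε * (1 + (Real.log 2)⁻¹) * t := by ring
  calc |α t - α s₀ - (t - s₀) * α' t| = |∫ u in s₀..t, (α' u - α' t)| := by rw [key]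
  _ ≤ |∫ u in s₀..t, B u| := habs
  _ ≤ ε * (1 + (Real.log 2)⁻¹) * t := hfinal

lemma core_tendsto {α α' : ℝ → ℝ} (hderiv : ∀ u ∈ Set.Ioi (0:ℝ), HasDerivAt α (α' u) u)
    (hcont : ContinuousOn α' (Set.Ioi 0)) {C : ℝ}
    (hlow : ∀ u ∈ Set.Ioi (0:ℝ), Real.exp (-C) ≤ α' u)
    (hup : ∀ u ∈ Set.Ioi (0:ℝ), α' u ≤ Real.exp C)
    (h0 : Tendsto α (nhdsWithin 0 (Set.Ioi 0)) (nhds 0))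
    (hosc0 : Tendsto (fun r => osc α' ((1:ℝ)/2 * r) r) (nhdsWithin 0 (Set.Ioi 0)) (nhds 0))
    (hoscinf : Tendsto (fun r => osc α' ((1:ℝ)/2 * r) r) atTop (nhds 0)) :
    Tendsto (fun t => α' t - α t / t) (nhdsWithin 0 (Set.Ioi 0)) (nhds 0) ∧
    Tendsto (fun t => α' t - α t / t) atTop (nhds 0) := by
  have hM : ∀ u ∈ Set.Ioi (0:ℝ), |α' u| ≤ Real.exp C := by
    intro u hu
    rw [abs_of_pos ((Real.exp_pos _).trans_le (hlow u hu))]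
    exact hup u hu
  set c : ℝ := 1 + (Real.log 2)⁻¹ with hc
  have hcpos : 0 < c := by
    have := Real.log_pos one_lt_two; positivity
  have habs_eq : ∀ t : ℝ, 0 < t → |α' t - α t / t| = |α t - t * α' t| / t := by
    intro t htpos
    have h1 : α' t - α t / t = (t * α' t - α t) / t := by field_simp
    rw [h1, abs_div, abs_of_pos htpos, abs_sub_comm]
  have hhalf : ∀ r : ℝ, (1:ℝ)/2 * r = r / 2 := fun r => by ring
  constructor
  · rw [Metric.tendsto_nhdsWithin_nhds]
    intro ε hε
    set ε' : ℝ := ε / (2 * c) with hε'def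
    have hε' : 0 < ε' := by positivity
    obtain ⟨δ, hδ, hδ'⟩ := Metric.tendsto_nhdsWithin_nhds.mp hosc0 ε' hε'
    refine ⟨δ, hδ, ?_⟩
    intro t ht htδ
    have htpos : 0 < t := ht
    have hoscle : ∀ r, 0 < r → r ≤ t → osc α' (r/2) r ≤ ε' := by
      intro r hr hrt
      have hrδ : dist r 0 < δ := by
        rw [Real.dist_eq, sub_zero, abs_of_pos hr]
        calc r ≤ t := hrt
        _ < δ := by rwa [Real.dist_eq, sub_zero, abs_of_pos htpos] at htδ
      have := hδ' hr hrδ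
      rw [Real.dist_eq, sub_zero] at this
      rw [← hhalf r]
      exact (le_abs_self _).trans this.le
    have hkey : |α t - t * α' t| ≤ ε' * c * t := by
      have hev : ∀ᶠ s₀ in nhdsWithin 0 (Set.Ioi 0),
          |α t - α s₀ - (t - s₀) * α' t| ≤ ε' * (1 + (Real.log 2)⁻¹) * t := by
        filter_upwards [Ioo_mem_nhdsGT_of_mem (Set.mem_Ico.2 ⟨le_refl 0, htpos⟩)] with s₀ hs₀
        exact ftc_bound hderiv hcont hM hs₀.1 hs₀.2.le hε'.le
          (fun r hr hrt => hoscle r (hs₀.1.trans_le hr) hrt)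
      have htend : Tendsto (fun s₀ : ℝ => |α t - α s₀ - (t - s₀) * α' t|)
          (nhdsWithin 0 (Set.Ioi 0)) (nhds |α t - t * α' t|) := by
        have hid : Tendsto (fun s₀ : ℝ => s₀) (nhdsWithin 0 (Set.Ioi 0)) (nhds 0) :=
          tendsto_id.mono_left nhdsWithin_le_nhds
        have := ((tendsto_const_nhds (x := α t)).sub h0).sub
          (((tendsto_const_nhds (x := t)).sub hid).mul (tendsto_const_nhds (x := α' t)))
        simp only [sub_zero] at this
        exact this.abs
      exact le_of_tendsto htend hev
    rw [Real.dist_eq, sub_zero, habs_eq t htpos, div_lt_iff₀ htpos]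
    have hεc : ε' * c = ε / 2 := by rw [hε'def]; field_simp
    calc |α t - t * α' t| ≤ ε' * c * t := hkey
    _ = ε / 2 * t := by rw [hεc]
    _ < ε * t := by nlinarith
  · rw [Metric.tendsto_atTop]
    intro ε hε
    set ε' : ℝ := ε / (2 * c) with hε'def
    have hε' : 0 < ε' := by positivity
    obtain ⟨N, hN⟩ := Metric.tendsto_atTop.mp hoscinf ε' hε'
    set R : ℝ := max N 1 with hR
    have hRpos : 0 < R := lt_of_lt_of_le one_pos (le_max_right _ _)
    set K : ℝ := |α R| + R * Real.exp C with hK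
    have hKnn : 0 ≤ K := by positivity
    refine ⟨max R (2 * K / ε + 1), ?_⟩
    intro t hT
    have htR : R ≤ t := (le_max_left _ _).trans hT
    have htpos : 0 < t := hRpos.trans_le htR
    have htK : 2 * K / ε + 1 ≤ t := (le_max_right _ _).trans hT
    have hoscle : ∀ r, R ≤ r → r ≤ t → osc α' (r/2) r ≤ ε' := by
      intro r hr _
      have := hN r (le_trans (le_max_left _ _) hr)
      rw [Real.dist_eq, sub_zero] at this
      rw [← hhalf r]
      exact (le_abs_self _).trans this.le
    have hmain : |α t - α R - (t - R) * α' t| ≤ ε' * c * t :=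
      ftc_bound hderiv hcont hM hRpos htR hε'.le hoscle
    have hkey : |α t - t * α' t| ≤ ε' * c * t + K := by
      have h1 : α t - t * α' t = (α t - α R - (t - R) * α' t) + α R - R * α' t := by ring
      have h2 : |α t - t * α' t| ≤ |α t - α R - (t - R) * α' t| + |α R| + R * |α' t| := by
        rw [h1]
        calc |α t - α R - (t - R) * α' t + α R - R * α' t|
            ≤ |α t - α R - (t - R) * α' t + α R| + |R * α' t| := abs_sub _ _
        _ ≤ |α t - α R - (t - R) * α' t| + |α R| + |R| * |α' t| := by
              rw [abs_mul]; exact add_le_add_left (abs_add_le _ _) _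
        _ = |α t - α R - (t - R) * α' t| + |α R| + R * |α' t| := by
              rw [abs_of_pos hRpos]
      have h3 : R * |α' t| ≤ R * Real.exp C :=
        mul_le_mul_of_nonneg_left (hM t htpos) hRpos.le
      rw [hK]; linarith
    rw [Real.dist_eq, sub_zero, habs_eq t htpos]
    rw [div_lt_iff₀ htpos]
    have hKt : K < ε / 2 * t := by
      have ht1 : 2 * K / ε < t := by linarith
      rw [div_lt_iff₀ hε] at ht1
      nlinarith
    have hεc : ε' * c = ε / 2 := by rw [hε'def]; field_simp
    calc |α t - t * α' t| ≤ ε' * c * t + K := hkey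
    _ < ε / 2 * t + ε / 2 * t := by rw [hεc]; linarith
    _ = ε * t := by ring

lemma osc_small0 {f : ℝ → ℝ} (h : Tendsto f (nhdsWithin 0 (Set.Ioi 0)) (nhds 0))
    {l : ℝ} (hl : l ∈ Set.Ioo (0:ℝ) 1) :
    Tendsto (fun r => osc f (l*r) r) (nhdsWithin 0 (Set.Ioi 0)) (nhds 0) := by
  rw [Metric.tendsto_nhdsWithin_nhds]
  intro ε hε
  obtain ⟨δ, hδ, hδ'⟩ := Metric.tendsto_nhdsWithin_nhds.mp h (ε/3) (by linarith)
  refine ⟨δ, hδ, ?_⟩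
  intro r hr hrδ
  rw [Real.dist_eq, sub_zero, abs_of_nonneg (osc_nonneg _ _ _)]
  have hrpos : (0:ℝ) < r := hr
  have hb : ∀ u ∈ Set.Icc (l*r) r, |f u| ≤ ε/3 := by
    intro u hu
    have hupos : 0 < u := lt_of_lt_of_le (mul_pos hl.1 hrpos) hu.1
    have : dist u 0 < δ := by
      rw [Real.dist_eq, sub_zero, abs_of_pos hupos]
      calc u ≤ r := hu.2
      _ < δ := by rwa [Real.dist_eq, sub_zero, abs_of_pos hrpos] at hrδ
    have := hδ' hupos this
    rw [Real.dist_eq, sub_zero] at this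
    exact this.le
  have : osc f (l*r) r ≤ 2*ε/3 := by
    apply osc_le (by linarith)
    intro t ht τ hτ
    rw [Real.norm_eq_abs]
    calc |f t - f τ| ≤ |f t| + |f τ| := abs_sub _ _
    _ ≤ ε/3 + ε/3 := add_le_add (hb t ht) (hb τ hτ)
    _ = 2*ε/3 := by ring
  linarith

lemma osc_small_inf {f : ℝ → ℝ} (h : Tendsto f atTop (nhds 0))
    {l : ℝ} (hl : l ∈ Set.Ioo (0:ℝ) 1) :
    Tendsto (fun r => osc f (l*r) r) atTop (nhds 0) := by
  rw [Metric.tendsto_atTop]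
  intro ε hε
  obtain ⟨N, hN⟩ := Metric.tendsto_atTop.mp h (ε/3) (by linarith)
  refine ⟨max (N/l) 1, ?_⟩
  intro r hr
  rw [Real.dist_eq, sub_zero, abs_of_nonneg (osc_nonneg _ _ _)]
  have hr1 : (1:ℝ) ≤ r := le_trans (le_max_right _ _) hr
  have hb : ∀ u ∈ Set.Icc (l*r) r, |f u| ≤ ε/3 := by
    intro u hu
    have hNu : N ≤ u := by
      have : N/l ≤ r := le_trans (le_max_left _ _) hr
      have : N ≤ l * r := by
        rw [div_le_iff₀ hl.1] at this; linarith [this]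
      linarith [hu.1]
    have := hN u hNu
    rw [Real.dist_eq, sub_zero] at this
    exact this.le
  have : osc f (l*r) r ≤ 2*ε/3 := by
    apply osc_le (by linarith)
    intro t ht τ hτ
    rw [Real.norm_eq_abs]
    calc |f t - f τ| ≤ |f t| + |f τ| := abs_sub _ _
    _ ≤ ε/3 + ε/3 := add_le_add (hb t ht) (hb τ hτ)
    _ = 2*ε/3 := by ring
  linarith

lemma osc_mvt_le {f f' : ℝ → ℝ} (hd : ∀ t ∈ Set.Ioi (0:ℝ), HasDerivAt f (f' t) t)
    {l r ε' : ℝ} (hl : l ∈ Set.Ioo (0:ℝ) 1) (hr : 0 < r) (hε' : 0 ≤ ε')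
    (hb : ∀ u ∈ Set.Icc (l*r) r, |u * f' u| ≤ ε') :
    osc f (l*r) r ≤ ε' * (1-l) / l := by
  have hlr : 0 < l * r := by have := hl.1; positivity
  have hIcc : Set.Icc (l*r) r ⊆ Set.Ioi (0:ℝ) := fun u hu => lt_of_lt_of_le hlr hu.1
  have key : ∀ t ∈ Set.Icc (l*r) r, ∀ τ ∈ Set.Icc (l*r) r, t < τ → |f τ - f t| ≤ ε' * (1-l) / l := by
    intro t ht τ hτ htτ
    obtain ⟨ξ, hξ, hξ'⟩ := exists_hasDerivAt_eq_slope f f' htτ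
      (fun u hu => ((hd u (hIcc ⟨le_trans ht.1 hu.1, le_trans hu.2 hτ.2⟩)).continuousAt).continuousWithinAt)
      (fun u hu => hd u (hIcc ⟨le_trans ht.1 hu.1.le, le_trans hu.2.le hτ.2⟩))
    have hξmem : ξ ∈ Set.Icc (l*r) r := ⟨le_trans ht.1 hξ.1.le, le_trans hξ.2.le hτ.2⟩
    have hξpos : 0 < ξ := hIcc hξmem
    have h1 : f τ - f t = f' ξ * (τ - t) := by
      rw [hξ', div_mul_cancel₀ _ (ne_of_gt (sub_pos.2 htτ))]
    have hbξ := hb ξ hξmem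
    rw [abs_mul, abs_of_pos hξpos] at hbξ
    have h2 : |f' ξ| ≤ ε' / (l * r) := by
      rw [le_div_iff₀ hlr]
      calc |f' ξ| * (l*r) ≤ |f' ξ| * ξ := by
            apply mul_le_mul_of_nonneg_left hξmem.1 (abs_nonneg _)
      _ = ξ * |f' ξ| := mul_comm _ _
      _ ≤ ε' := hbξ
    calc |f τ - f t| = |f' ξ| * |τ - t| := by rw [h1, abs_mul]
    _ ≤ (ε' / (l*r)) * (r - l*r) := by
          apply mul_le_mul h2 _ (abs_nonneg _) (div_nonneg hε' hlr.le)
          rw [abs_of_pos (by linarith)]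
          linarith [hτ.2, ht.1]
    _ = ε' * (1-l) / l := by field_simp [ne_of_gt hl.1, ne_of_gt hr]
  have hdnn : 0 ≤ ε' * (1-l) / l := div_nonneg (mul_nonneg hε' (by linarith [hl.2])) hl.1.le
  apply osc_le hdnn
  intro t ht τ hτ
  rw [Real.norm_eq_abs]
  rcases lt_trichotomy t τ with h | h | h
  · rw [abs_sub_comm]; exact key t ht τ hτ h
  · simp only [h, sub_self, abs_zero]; exact hdnn
  · exact key τ hτ t ht h

lemma osc_mvt0 {f f' : ℝ → ℝ} (hd : ∀ t ∈ Set.Ioi (0:ℝ), HasDerivAt f (f' t) t)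
    (h : Tendsto (fun t => t * f' t) (nhdsWithin 0 (Set.Ioi 0)) (nhds 0))
    {l : ℝ} (hl : l ∈ Set.Ioo (0:ℝ) 1) :
    Tendsto (fun r => osc f (l*r) r) (nhdsWithin 0 (Set.Ioi 0)) (nhds 0) := by
  rw [Metric.tendsto_nhdsWithin_nhds]
  intro ε hε
  set ε' : ℝ := ε * l / 2 with hε'def
  have hε'pos : 0 < ε' := by have := hl.1; positivity
  obtain ⟨δ, hδ, hδ'⟩ := Metric.tendsto_nhdsWithin_nhds.mp h ε' hε'pos
  refine ⟨δ, hδ, ?_⟩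
  intro r hr hrδ
  rw [Real.dist_eq, sub_zero, abs_of_nonneg (osc_nonneg _ _ _)]
  have hrpos : (0:ℝ) < r := hr
  have hb : ∀ u ∈ Set.Icc (l*r) r, |u * f' u| ≤ ε' := by
    intro u hu
    have hupos : 0 < u := lt_of_lt_of_le (mul_pos hl.1 hrpos) hu.1
    have : dist u 0 < δ := by
      rw [Real.dist_eq, sub_zero, abs_of_pos hupos]
      calc u ≤ r := hu.2
      _ < δ := by rwa [Real.dist_eq, sub_zero, abs_of_pos hrpos] at hrδ
    have := hδ' hupos this
    rw [Real.dist_eq, sub_zero] at this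
    exact this.le
  calc osc f (l*r) r ≤ ε' * (1-l) / l := osc_mvt_le hd hl hrpos hε'pos.le hb
  _ = ε * (1-l) / 2 := by field_simp [ne_of_gt hl.1]; ring
  _ < ε := by nlinarith [hl.1, hl.2]

lemma osc_mvt_inf {f f' : ℝ → ℝ} (hd : ∀ t ∈ Set.Ioi (0:ℝ), HasDerivAt f (f' t) t)
    (h : Tendsto (fun t => t * f' t) atTop (nhds 0))
    {l : ℝ} (hl : l ∈ Set.Ioo (0:ℝ) 1) :
    Tendsto (fun r => osc f (l*r) r) atTop (nhds 0) := by
  rw [Metric.tendsto_atTop]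
  intro ε hε
  set ε' : ℝ := ε * l / 2 with hε'def
  have hε'pos : 0 < ε' := by have := hl.1; positivity
  obtain ⟨N, hN⟩ := Metric.tendsto_atTop.mp h ε' hε'pos
  refine ⟨max (N/l) 1, ?_⟩
  intro r hr
  rw [Real.dist_eq, sub_zero, abs_of_nonneg (osc_nonneg _ _ _)]
  have hrpos : (0:ℝ) < r := lt_of_lt_of_le one_pos (le_trans (le_max_right _ _) hr)
  have hb : ∀ u ∈ Set.Icc (l*r) r, |u * f' u| ≤ ε' := by
    intro u hu
    have hNu : N ≤ u := by
      have h1 : N/l ≤ r := le_trans (le_max_left _ _) hr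
      rw [div_le_iff₀ hl.1] at h1
      calc N ≤ r * l := h1
      _ = l * r := mul_comm _ _
      _ ≤ u := hu.1
    have := hN u hNu
    rw [Real.dist_eq, sub_zero] at this
    exact this.le
  calc osc f (l*r) r ≤ ε' * (1-l) / l := osc_mvt_le hd hl hrpos hε'pos.le hb
  _ = ε * (1-l) / 2 := by field_simp [ne_of_gt hl.1]; ring
  _ < ε := by nlinarith [hl.1, hl.2]

lemma forward {α α' : ℝ → ℝ}
    (hbij : Set.BijOn α (Set.Ioi 0) (Set.Ioi 0))
    (hmono : StrictMonoOn α (Set.Ioi 0))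
    (hderiv : ∀ t ∈ Set.Ioi (0:ℝ), HasDerivAt α (α' t) t)
    (hderiv_cont : ContinuousOn α' (Set.Ioi 0))
    (h0 : Tendsto α (nhdsWithin 0 (Set.Ioi 0)) (nhds 0))
    {C : ℝ} (hC : ∀ t ∈ Set.Ioi (0:ℝ), |Real.log (α' t)| ≤ C)
    (hSO : SO α') :
    ∃ ω ω' : ℝ → ℝ,
      (∀ t ∈ Set.Ioi (0:ℝ), α t = t * Real.exp (ω t)) ∧
      SO ω ∧
      (∀ t ∈ Set.Ioi (0:ℝ), HasDerivAt ω (ω' t) t) ∧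
      ContinuousOn ω' (Set.Ioi 0) ∧
      SO (fun t => t * ω' t) ∧
      (∃ ε > (0:ℝ), ∀ t ∈ Set.Ioi (0:ℝ), ε ≤ 1 + t * ω' t) := by
  have hαpos : ∀ t ∈ Set.Ioi (0:ℝ), 0 < α t := fun t ht => hbij.mapsTo ht
  have hαcont : ContinuousOn α (Set.Ioi 0) :=
    fun u hu => (hderiv u hu).continuousAt.continuousWithinAt
  have hprod : Real.exp C * Real.exp (-C) = 1 := by rw [← Real.exp_add]; simp
  have hup : ∀ t ∈ Set.Ioi (0:ℝ), α' t ≤ Real.exp C := by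
    intro t ht
    rcases le_or_gt (α' t) 0 with h | h
    · exact h.trans (Real.exp_pos C).le
    · have hle : Real.log (α' t) ≤ C := (abs_le.mp (hC t ht)).2
      calc α' t = Real.exp (Real.log (α' t)) := (Real.exp_log h).symm
      _ ≤ Real.exp C := Real.exp_le_exp.2 hle
  have hno : ∀ u ∈ Set.Ioi (0:ℝ), ¬ (0 < α' u ∧ α' u < Real.exp (-C)) := by
    rintro u hu ⟨h1, h2⟩
    have hlt : Real.log (α' u) < -C := by
      calc Real.log (α' u) < Real.log (Real.exp (-C)) := Real.log_lt_log h1 h2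
      _ = -C := Real.log_exp _
    have := (abs_le.mp (hC u hu)).1
    linarith
  have hlow : ∀ t ∈ Set.Ioi (0:ℝ), Real.exp (-C) ≤ α' t := by
    intro t ht
    by_contra hcon
    push_neg at hcon
    have ht0 : α' t ≤ 0 := by
      by_contra h'
      push_neg at h'
      exact hno t ht ⟨h', hcon⟩
    have hsub : Set.Icc t (t+1) ⊆ Set.Ioi (0:ℝ) := fun u hu => lt_of_lt_of_le ht hu.1
    obtain ⟨ξ, hξ, hξ'⟩ := exists_hasDerivAt_eq_slope α α' (by linarith : t < t+1)
      (fun u hu => ((hderiv u (hsub hu)).continuousAt).continuousWithinAt)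
      (fun u hu => hderiv u (hsub ⟨hu.1.le, hu.2.le⟩))
    have hξpos : (0:ℝ) < ξ := lt_trans ht hξ.1
    have hslope : 0 < α' ξ := by
      rw [hξ']
      apply div_pos _ (by linarith)
      have h2 := hmono ht (hsub ⟨by linarith, le_refl _⟩) (by linarith : t < t+1)
      linarith
    have hξge : Real.exp (-C) ≤ α' ξ := by
      by_contra h'
      push_neg at h'
      exact hno ξ hξpos ⟨hslope, h'⟩
    have hcontξ : ContinuousOn α' (Set.Icc t ξ) :=
      hderiv_cont.mono (fun u hu => lt_of_lt_of_le ht hu.1)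
    have hmem : Real.exp (-C)/2 ∈ Set.Icc (α' t) (α' ξ) :=
      ⟨by nlinarith [Real.exp_pos (-C)], by nlinarith [Real.exp_pos (-C)]⟩
    obtain ⟨u, hu, hu'⟩ := intermediate_value_Icc hξ.1.le hcontξ hmem
    have hupos : (0:ℝ) < u := lt_of_lt_of_le ht hu.1
    exact hno u hupos ⟨by rw [hu']; positivity, by rw [hu']; nlinarith [Real.exp_pos (-C)]⟩
  have hbound : ∀ t ∈ Set.Ioi (0:ℝ), Real.exp (-C) * t ≤ α t ∧ α t ≤ Real.exp C * t := by
    intro t ht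
    have ht' : (0:ℝ) < t := ht
    have hslope : ∀ s ∈ Set.Ioo (0:ℝ) t,
        Real.exp (-C) * (t - s) ≤ α t - α s ∧ α t - α s ≤ Real.exp C * (t - s) := by
      intro s hs
      have hsub : Set.Icc s t ⊆ Set.Ioi (0:ℝ) := fun u hu => lt_of_lt_of_le hs.1 hu.1
      obtain ⟨ξ, hξ, hξ'⟩ := exists_hasDerivAt_eq_slope α α' hs.2
        (fun u hu => ((hderiv u (hsub hu)).continuousAt).continuousWithinAt)
        (fun u hu => hderiv u (hsub ⟨hu.1.le, hu.2.le⟩))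
      have hξpos : (0:ℝ) < ξ := lt_trans hs.1 hξ.1
      have h1 := hlow ξ hξpos
      have h2 := hup ξ hξpos
      rw [hξ'] at h1 h2
      have hts : (0:ℝ) < t - s := by linarith [hs.2]
      constructor
      · rw [le_div_iff₀ hts] at h1; linarith
      · rw [div_le_iff₀ hts] at h2; linarith
    have hidlim : Tendsto (fun s : ℝ => s) (nhdsWithin 0 (Set.Ioi 0)) (nhds 0) :=
      tendsto_id.mono_left nhdsWithin_le_nhds
    have hev : Set.Ioo (0:ℝ) t ∈ nhdsWithin 0 (Set.Ioi 0) :=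
      Ioo_mem_nhdsGT_of_mem (Set.mem_Ico.2 ⟨le_refl 0, ht'⟩)
    constructor
    · have htend : Tendsto (fun s => α s + Real.exp (-C)*(t-s)) (nhdsWithin 0 (Set.Ioi 0))
          (nhds (Real.exp (-C)*t)) := by
        have := h0.add ((tendsto_const_nhds (x := Real.exp (-C))).mul
          ((tendsto_const_nhds (x := t)).sub hidlim))
        simpa using this
      apply le_of_tendsto htend
      filter_upwards [hev] with s hs
      linarith [(hslope s hs).1]
    · have htend : Tendsto (fun s => α s + Real.exp C*(t-s)) (nhdsWithin 0 (Set.Ioi 0))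
          (nhds (Real.exp C*t)) := by
        have := h0.add ((tendsto_const_nhds (x := Real.exp C)).mul
          ((tendsto_const_nhds (x := t)).sub hidlim))
        simpa using this
      apply ge_of_tendsto htend
      filter_upwards [hev] with s hs
      linarith [(hslope s hs).2]
  -- definitions
  set ω : ℝ → ℝ := fun t => Real.log (α t) - Real.log t with hωdef
  set ω' : ℝ → ℝ := fun t => α' t / α t - 1/t with hω'def
  have hωd : ∀ t ∈ Set.Ioi (0:ℝ), HasDerivAt ω (ω' t) t := by
    intro t ht
    have ht' : (0:ℝ) < t := ht
    have h1 := (hderiv t ht).log (ne_of_gt (hαpos t ht))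
    have h2 := Real.hasDerivAt_log (ne_of_gt ht')
    have := h1.sub h2
    simp only [hω'def, one_div]; exact this
  have hω'c : ContinuousOn ω' (Set.Ioi 0) := by
    rw [hω'def]
    apply ContinuousOn.sub (hderiv_cont.div hαcont (fun u hu => ne_of_gt (hαpos u hu)))
    exact continuousOn_const.div continuousOn_id (fun u hu => ne_of_gt hu)
  have hαform : ∀ t ∈ Set.Ioi (0:ℝ), α t = t * Real.exp (ω t) := by
    intro t ht
    have ht' : (0:ℝ) < t := ht
    rw [hωdef]
    simp only
    rw [Real.exp_sub, Real.exp_log (hαpos t ht), Real.exp_log ht']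
    field_simp
  -- core tendsto
  obtain ⟨hosc0, hoscinf⟩ := hSO.2.2 (1/2) ⟨by norm_num, by norm_num⟩
  have hcore := core_tendsto hderiv hderiv_cont hlow hup h0 hosc0 hoscinf
  have hgval : ∀ t ∈ Set.Ioi (0:ℝ), t * ω' t = (t / α t) * (α' t - α t / t) := by
    intro t ht
    have ht' : (0:ℝ) < t := ht
    rw [hω'def]
    field_simp [ne_of_gt ht', ne_of_gt (hαpos t ht)]
    all_goals ring
  have hgbig : ∀ᶠ t in nhdsWithin 0 (Set.Ioi 0), ‖t * ω' t‖ ≤ Real.exp C * |α' t - α t / t| := by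
    filter_upwards [self_mem_nhdsWithin] with t ht
    have ht' : (0:ℝ) < t := ht
    rw [Real.norm_eq_abs, hgval t ht, abs_mul]
    have h1 : |t / α t| ≤ Real.exp C := by
      rw [abs_of_pos (div_pos ht' (hαpos t ht))]
      rw [div_le_iff₀ (hαpos t ht)]
      have h2 := (hbound t ht).1
      nlinarith [Real.exp_pos C, Real.exp_pos (-C)]
    exact mul_le_mul_of_nonneg_right h1 (abs_nonneg _)
  have hgbig' : ∀ᶠ t in atTop, ‖t * ω' t‖ ≤ Real.exp C * |α' t - α t / t| := by
    filter_upwards [eventually_gt_atTop 0] with t ht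
    have ht' : (0:ℝ) < t := ht
    rw [Real.norm_eq_abs, hgval t ht, abs_mul]
    have h1 : |t / α t| ≤ Real.exp C := by
      rw [abs_of_pos (div_pos ht' (hαpos t ht))]
      rw [div_le_iff₀ (hαpos t ht)]
      have h2 := (hbound t ht).1
      nlinarith [Real.exp_pos C, Real.exp_pos (-C)]
    exact mul_le_mul_of_nonneg_right h1 (abs_nonneg _)
  have habs0 : Tendsto (fun t => Real.exp C * |α' t - α t / t|) (nhdsWithin 0 (Set.Ioi 0)) (nhds 0) := by
    have h2 : Tendsto (fun t => |α' t - α t / t|) (nhdsWithin 0 (Set.Ioi 0)) (nhds 0) := by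
      have := hcore.1.abs; simpa using this
    have := h2.const_mul (Real.exp C); simpa using this
  have habsinf : Tendsto (fun t => Real.exp C * |α' t - α t / t|) atTop (nhds 0) := by
    have h2 : Tendsto (fun t => |α' t - α t / t|) atTop (nhds 0) := by
      have := hcore.2.abs; simpa using this
    have := h2.const_mul (Real.exp C); simpa using this
  have hg0 : Tendsto (fun t => t * ω' t) (nhdsWithin 0 (Set.Ioi 0)) (nhds 0) :=
    squeeze_zero_norm' hgbig habs0
  have hginf : Tendsto (fun t => t * ω' t) atTop (nhds 0) :=
    squeeze_zero_norm' hgbig' habsinf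
  -- SO ω
  have hSOω : SO ω := by
    refine ⟨?_, ⟨C, ?_⟩, ?_⟩
    · rw [hωdef]
      apply ContinuousOn.sub (hαcont.log (fun u hu => ne_of_gt (hαpos u hu)))
      exact fun u hu => (Real.continuousAt_log (ne_of_gt hu)).continuousWithinAt
    · intro t ht
      have ht' : (0:ℝ) < t := ht
      rw [hωdef]
      simp only [Real.norm_eq_abs]
      rw [← Real.log_div (ne_of_gt (hαpos t ht)) (ne_of_gt ht')]
      have hdiv : 0 < α t / t := div_pos (hαpos t ht) ht'
      rw [abs_le]
      constructor
      · rw [Real.le_log_iff_exp_le hdiv, le_div_iff₀ ht']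
        exact (hbound t ht).1
      · rw [Real.log_le_iff_le_exp hdiv, div_le_iff₀ ht']
        calc α t ≤ Real.exp C * t := (hbound t ht).2
        _ = Real.exp C * t := rfl
    · intro l hl
      exact ⟨osc_mvt0 hωd hg0 hl, osc_mvt_inf hωd hginf hl⟩
  -- SO g
  have hgval2 : ∀ t ∈ Set.Ioi (0:ℝ), t * ω' t = t * α' t / α t - 1 := by
    intro t ht
    have ht' : (0:ℝ) < t := ht
    rw [hω'def]
    field_simp [ne_of_gt ht', ne_of_gt (hαpos t ht)]
    all_goals ring
  have hSOg : SO (fun t => t * ω' t) := by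
    refine ⟨?_, ⟨Real.exp C * Real.exp C + 1, ?_⟩, ?_⟩
    · exact (continuousOn_id.mul hω'c)
    · intro t ht
      have ht' : (0:ℝ) < t := ht
      simp only [Real.norm_eq_abs]
      rw [hgval2 t ht]
      have hαp := hαpos t ht
      have h1 : t * α' t / α t ≤ Real.exp C * Real.exp C := by
        rw [div_le_iff₀ hαp]
        have h2 := (hbound t ht).1
        have h3 := hup t ht
        have h5 : Real.exp C * Real.exp C * (Real.exp (-C) * t) ≤ Real.exp C * Real.exp C * α t :=
          mul_le_mul_of_nonneg_left h2 (by positivity)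
        have h6 : Real.exp C * Real.exp C * (Real.exp (-C) * t) = Real.exp C * t := by
          rw [show Real.exp C * Real.exp C * (Real.exp (-C)*t)
            = (Real.exp C * Real.exp (-C)) * (Real.exp C * t) by ring, hprod, one_mul]
        have h7 : t * α' t ≤ t * Real.exp C := mul_le_mul_of_nonneg_left h3 ht'.le
        have h8 : t * Real.exp C = Real.exp C * t := mul_comm _ _
        linarith
      have h4 : 0 < t * α' t / α t := by
        apply div_pos _ hαp
        exact mul_pos ht' ((Real.exp_pos _).trans_le (hlow t ht))
      rw [abs_le]
      constructor <;> nlinarith [Real.exp_pos C, mul_pos (Real.exp_pos C) (Real.exp_pos C)]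
    · intro l hl
      exact ⟨osc_small0 hg0 hl, osc_small_inf hginf hl⟩
  refine ⟨ω, ω', hαform, hSOω, hωd, hω'c, hSOg, Real.exp (-C) * Real.exp (-C), by positivity, ?_⟩
  intro t ht
  have ht' : (0:ℝ) < t := ht
  have hαp := hαpos t ht
  have h1 : 1 + t * ω' t = t * α' t / α t := by
    rw [hgval2 t ht]; ring
  rw [h1, le_div_iff₀ hαp]
  have h2 := (hbound t ht).2
  have h3 := hlow t ht
  have h5 : Real.exp (-C) * Real.exp (-C) * α t ≤ Real.exp (-C) * Real.exp (-C) * (Real.exp C * t) :=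
    mul_le_mul_of_nonneg_left h2 (by positivity)
  have h6 : Real.exp (-C) * Real.exp (-C) * (Real.exp C * t) = Real.exp (-C) * t := by
    rw [show Real.exp (-C) * Real.exp (-C) * (Real.exp C * t)
      = (Real.exp C * Real.exp (-C)) * (Real.exp (-C) * t) by ring, hprod, one_mul]
  have h7 : t * Real.exp (-C) ≤ t * α' t := mul_le_mul_of_nonneg_left h3 ht'.le
  have h8 : Real.exp (-C) * t = t * Real.exp (-C) := mul_comm _ _
  linarith

lemma backward {α α' : ℝ → ℝ}
    (hderiv : ∀ t ∈ Set.Ioi (0:ℝ), HasDerivAt α (α' t) t)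
    (hderiv_cont : ContinuousOn α' (Set.Ioi 0))
    {ω ω' : ℝ → ℝ}
    (hform : ∀ t ∈ Set.Ioi (0:ℝ), α t = t * Real.exp (ω t))
    (hSOω : SO ω)
    (hωd : ∀ t ∈ Set.Ioi (0:ℝ), HasDerivAt ω (ω' t) t)
    (hω'c : ContinuousOn ω' (Set.Ioi 0))
    (hSOg : SO (fun t => t * ω' t))
    {ε₀ : ℝ} (hε₀ : 0 < ε₀) (hεb : ∀ t ∈ Set.Ioi (0:ℝ), ε₀ ≤ 1 + t * ω' t) :
    (∃ C, ∀ t ∈ Set.Ioi (0:ℝ), |Real.log (α' t)| ≤ C) ∧ SO α' := by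
  obtain ⟨Cω, hCω⟩ := hSOω.2.1
  obtain ⟨Cg, hCg⟩ := hSOg.2.1
  simp only [Real.norm_eq_abs] at hCω hCg
  have h1mem : (1:ℝ) ∈ Set.Ioi (0:ℝ) := by norm_num
  have hCω0 : 0 ≤ Cω := le_trans (abs_nonneg _) (hCω 1 h1mem)
  have hCg0 : 0 ≤ Cg := le_trans (abs_nonneg _) (hCg 1 h1mem)
  have hα'form : ∀ t ∈ Set.Ioi (0:ℝ), α' t = Real.exp (ω t) * (1 + t * ω' t) := by
    intro t ht
    have ht' : (0:ℝ) < t := ht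
    have he : HasDerivAt (fun u => Real.exp (ω u)) (Real.exp (ω t) * ω' t) t := (hωd t ht).exp
    have h1 : HasDerivAt (fun u => u * Real.exp (ω u)) (Real.exp (ω t) * (1 + t * ω' t)) t := by
      have := (hasDerivAt_id t).mul he
      exact this.congr_deriv (by simp only [id]; ring)
    have heq : α =ᶠ[nhds t] (fun u => u * Real.exp (ω u)) := by
      filter_upwards [Ioi_mem_nhds ht'] with u hu
      exact hform u hu
    have h2 : HasDerivAt α (Real.exp (ω t) * (1 + t * ω' t)) t := h1.congr_of_eventuallyEq heq
    exact (hderiv t ht).unique h2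
  have hωb : ∀ t ∈ Set.Ioi (0:ℝ), ω t ≤ Cω ∧ -Cω ≤ ω t := by
    intro t ht
    have := abs_le.mp (hCω t ht)
    exact ⟨this.2, this.1⟩
  have hgb : ∀ t ∈ Set.Ioi (0:ℝ), t * ω' t ≤ Cg ∧ -Cg ≤ t * ω' t := by
    intro t ht
    have := abs_le.mp (hCg t ht)
    exact ⟨this.2, this.1⟩
  have hfac : ∀ t ∈ Set.Ioi (0:ℝ), ε₀ ≤ 1 + t * ω' t ∧ 1 + t * ω' t ≤ 1 + Cg := by
    intro t ht
    exact ⟨hεb t ht, by linarith [(hgb t ht).1]⟩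
  have hα'pos : ∀ t ∈ Set.Ioi (0:ℝ), 0 < α' t := by
    intro t ht
    rw [hα'form t ht]
    have := (hfac t ht).1
    have := Real.exp_pos (ω t)
    nlinarith
  -- log bound
  constructor
  · refine ⟨Cω + |Real.log ε₀| + |Real.log (1 + Cg)|, ?_⟩
    intro t ht
    rw [hα'form t ht]
    have hx : (0:ℝ) < 1 + t * ω' t := lt_of_lt_of_le hε₀ (hfac t ht).1
    rw [Real.log_mul (Real.exp_ne_zero _) (ne_of_gt hx), Real.log_exp]
    have hl1 : Real.log (1 + t * ω' t) ≤ Real.log (1 + Cg) :=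
      Real.log_le_log hx (hfac t ht).2
    have hl2 : Real.log ε₀ ≤ Real.log (1 + t * ω' t) :=
      Real.log_le_log hε₀ (hfac t ht).1
    obtain ⟨hw1, hw2⟩ := hωb t ht
    rw [abs_le]
    constructor
    · have h9 := neg_abs_le (Real.log ε₀)
      have h10 := abs_nonneg (Real.log (1 + Cg))
      linarith
    · have h9 := le_abs_self (Real.log (1 + Cg))
      have h10 := abs_nonneg (Real.log ε₀)
      linarith
  -- SO α'
  refine ⟨hderiv_cont, ⟨Real.exp Cω * (1 + Cg), ?_⟩, ?_⟩
  · intro t ht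
    rw [Real.norm_eq_abs, abs_of_pos (hα'pos t ht), hα'form t ht]
    apply mul_le_mul
    · exact Real.exp_le_exp.2 (hωb t ht).1
    · exact (hfac t ht).2
    · linarith [(hfac t ht).1]
    · positivity
  intro l hl
  have hkey : ∀ r : ℝ, 0 < r →
      osc α' (l*r) r ≤ Real.exp Cω * osc (fun t => t * ω' t) (l*r) r
        + ((1 + Cg) * Real.exp Cω) * osc ω (l*r) r := by
    intro r hr
    have hlr : 0 < l * r := mul_pos hl.1 hr
    have hIcc : Set.Icc (l*r) r ⊆ Set.Ioi (0:ℝ) := fun u hu => lt_of_lt_of_le hlr hu.1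
    have hK2p : (0:ℝ) < (1 + Cg) * Real.exp Cω := by positivity
    have hd : 0 ≤ Real.exp Cω * osc (fun t => t * ω' t) (l*r) r
        + ((1 + Cg) * Real.exp Cω) * osc ω (l*r) r :=
      add_nonneg (mul_nonneg (Real.exp_pos _).le (osc_nonneg _ _ _))
        (mul_nonneg hK2p.le (osc_nonneg _ _ _))
    apply osc_le hd
    intro t ht τ hτ
    have htI := hIcc ht
    have hτI := hIcc hτ
    rw [Real.norm_eq_abs, hα'form t htI, hα'form τ hτI]
    have e1 : Real.exp (ω t) * (1 + t * ω' t) - Real.exp (ω τ) * (1 + τ * ω' τ)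
        = Real.exp (ω t) * (t * ω' t - τ * ω' τ)
          + (1 + τ * ω' τ) * (Real.exp (ω t) - Real.exp (ω τ)) := by ring
    rw [e1]
    calc |Real.exp (ω t) * (t * ω' t - τ * ω' τ)
          + (1 + τ * ω' τ) * (Real.exp (ω t) - Real.exp (ω τ))|
        ≤ |Real.exp (ω t) * (t * ω' t - τ * ω' τ)|
          + |(1 + τ * ω' τ) * (Real.exp (ω t) - Real.exp (ω τ))| := abs_add_le _ _
    _ = Real.exp (ω t) * |t * ω' t - τ * ω' τ|
          + (1 + τ * ω' τ) * |Real.exp (ω t) - Real.exp (ω τ)| := by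
          rw [abs_mul, abs_mul, abs_of_pos (Real.exp_pos _),
            abs_of_pos (lt_of_lt_of_le hε₀ (hfac τ hτI).1)]
    _ ≤ Real.exp Cω * osc (fun t => t * ω' t) (l*r) r
          + ((1 + Cg) * Real.exp Cω) * osc ω (l*r) r := by
          apply add_le_add
          · have hg : |t * ω' t - τ * ω' τ| ≤ osc (fun t => t * ω' t) (l*r) r := by
              have := norm_sub_le_osc (f := fun t => t * ω' t) (M := Cg) (a := l*r) (b := r)
                (fun u hu => by rw [Real.norm_eq_abs]; exact hCg u (hIcc hu)) ht hτ
              simpa [Real.norm_eq_abs] using this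
            exact mul_le_mul (Real.exp_le_exp.2 (hωb t htI).1) hg (abs_nonneg _)
              (Real.exp_pos _).le
          · have hexp : |Real.exp (ω t) - Real.exp (ω τ)| ≤ Real.exp Cω * |ω t - ω τ| :=
              exp_lip (hωb t htI).1 (hωb τ hτI).1
            have hoscω : |ω t - ω τ| ≤ osc ω (l*r) r := by
              have := norm_sub_le_osc (f := ω) (M := Cω) (a := l*r) (b := r)
                (fun u hu => by rw [Real.norm_eq_abs]; exact hCω u (hIcc hu)) ht hτ
              simpa [Real.norm_eq_abs] using this
            calc (1 + τ * ω' τ) * |Real.exp (ω t) - Real.exp (ω τ)|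
                ≤ (1 + Cg) * (Real.exp Cω * |ω t - ω τ|) := by
                  apply mul_le_mul (hfac τ hτI).2 hexp (abs_nonneg _) (by linarith)
            _ = ((1 + Cg) * Real.exp Cω) * |ω t - ω τ| := by ring
            _ ≤ ((1 + Cg) * Real.exp Cω) * osc ω (l*r) r :=
                  mul_le_mul_of_nonneg_left hoscω hK2p.le
  have htend0 : Tendsto (fun r => Real.exp Cω * osc (fun t => t * ω' t) (l*r) r
      + ((1 + Cg) * Real.exp Cω) * osc ω (l*r) r) (nhdsWithin 0 (Set.Ioi 0)) (nhds 0) := by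
    have h1 := ((hSOg.2.2 l hl).1).const_mul (Real.exp Cω)
    have h2 := ((hSOω.2.2 l hl).1).const_mul ((1 + Cg) * Real.exp Cω)
    have := h1.add h2
    simpa using this
  have htendinf : Tendsto (fun r => Real.exp Cω * osc (fun t => t * ω' t) (l*r) r
      + ((1 + Cg) * Real.exp Cω) * osc ω (l*r) r) atTop (nhds 0) := by
    have h1 := ((hSOg.2.2 l hl).2).const_mul (Real.exp Cω)
    have h2 := ((hSOω.2.2 l hl).2).const_mul ((1 + Cg) * Real.exp Cω)
    have := h1.add h2
    simpa using this
  constructor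
  · apply squeeze_zero'
    · filter_upwards [self_mem_nhdsWithin] with r hr using osc_nonneg _ _ _
    · filter_upwards [self_mem_nhdsWithin] with r hr using hkey r hr
    · exact htend0
  · apply squeeze_zero'
    · filter_upwards [eventually_gt_atTop 0] with r hr using osc_nonneg _ _ _
    · filter_upwards [eventually_gt_atTop 0] with r hr using hkey r hr
    · exact htendinf

/-- Exponential representation of slowly oscillating shifts. -/
theorem exponential_representation (α α' : ℝ → ℝ)
    (hbij : Set.BijOn α (Set.Ioi 0) (Set.Ioi 0))
    (hmono : StrictMonoOn α (Set.Ioi 0))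
    (hderiv : ∀ t ∈ Set.Ioi (0:ℝ), HasDerivAt α (α' t) t)
    (hderiv_cont : ContinuousOn α' (Set.Ioi 0))
    (h0 : Tendsto α (nhdsWithin 0 (Set.Ioi 0)) (nhds 0))
    (hinf : Tendsto α atTop atTop)
    (hfix : ∀ t ∈ Set.Ioi (0:ℝ), α t ≠ t) :
    ((∃ C, ∀ t ∈ Set.Ioi (0:ℝ), |Real.log (α' t)| ≤ C) ∧ SO α') ↔
    (∃ ω ω' : ℝ → ℝ,
      (∀ t ∈ Set.Ioi (0:ℝ), α t = t * Real.exp (ω t)) ∧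
      SO ω ∧
      (∀ t ∈ Set.Ioi (0:ℝ), HasDerivAt ω (ω' t) t) ∧
      ContinuousOn ω' (Set.Ioi 0) ∧
      SO (fun t => t * ω' t) ∧
      (∃ ε > (0:ℝ), ∀ t ∈ Set.Ioi (0:ℝ), ε ≤ 1 + t * ω' t)) := by
  constructor
  · rintro ⟨⟨C, hC⟩, hSO⟩
    exact forward hbij hmono hderiv hderiv_cont h0 hC hSO
  · rintro ⟨ω, ω', hform, hSOω, hωd, hω'c, hSOg, ε₀, hε₀, hεb⟩
    exact backward hderiv hderiv_cont hform hSOω hωd hω'c hSOg hε₀ hεb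
end

section
/- Let α : (0,∞) → (0,∞) be a diffeomorphism with log α' bounded, let η(y) = y/(1−y), and set α̃ := η^{−1}∘α∘η on (0,1). Then for 1 < p < ∞ and the isometry G : L^p(0,∞) → L^p(0,1), (Gφ)(y) = (1−y)^{−2/p}φ(η(y)), one has G W_α G^{−1} = c_{α,p} W_{α̃}, where (W_α f) = f∘α, (W_{α̃} g) = g∘α̃, and c_{α,p}(y) = ((1−α̃(y))/(1−y))^{2/p}. -/
open Filter Set

noncomputable def Gop (p : ℝ) (φ : ℝ → ℂ) : ℝ → ℂ :=
  fun y => (((1 - y) ^ (-2 / p) : ℝ) : ℂ) * φ (y / (1 - y))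

noncomputable def Ginv (p : ℝ) (f : ℝ → ℂ) : ℝ → ℂ :=
  fun t => (((1 + t) ^ (-2 / p) : ℝ) : ℂ) * f (t / (1 + t))

/-- The transplanted shift `α̃ = η⁻¹ ∘ α ∘ η`, where `η(y)=y/(1-y)`. -/
noncomputable def alphaTilde (α : ℝ → ℝ) : ℝ → ℝ :=
  fun y => α (y / (1 - y)) / (1 + α (y / (1 - y)))

/-- `G W_α G⁻¹ = c_{α,p} W_{α̃}` as operators on `L^p(0,1)`, stated pointwise on `(0,1)`. -/
theorem conjugated_shift_operator (p : ℝ) (hp : 1 < p) (α α' : ℝ → ℝ)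
    (hbij : Set.BijOn α (Set.Ioi 0) (Set.Ioi 0))
    (hmono : StrictMonoOn α (Set.Ioi 0))
    (hderiv : ∀ t ∈ Set.Ioi (0:ℝ), HasDerivAt α (α' t) t)
    (hlog_bdd : ∃ C, ∀ t ∈ Set.Ioi (0:ℝ), |Real.log (α' t)| ≤ C) :
    ∀ f : ℝ → ℂ, ∀ y ∈ Set.Ioo (0:ℝ) 1,
      Gop p (fun t => Ginv p f (α t)) y =
        ((((1 - alphaTilde α y) / (1 - y)) ^ (2 / p) : ℝ) : ℂ) * f (alphaTilde α y) := by
  intro f y hy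
  obtain ⟨hy0, hy1⟩ := hy
  have h1y : (0:ℝ) < 1 - y := by linarith
  have ha : 0 < α (y / (1 - y)) := hbij.mapsTo (div_pos hy0 h1y)
  set a := α (y / (1 - y)) with ha_def
  have h1a : (0:ℝ) < 1 + a := by linarith
  have hcoef : (1 - alphaTilde α y) / (1 - y) = ((1 + a) * (1 - y))⁻¹ := by
    simp only [alphaTilde, ← ha_def]
    field_simp
    ring
  have hrpow : ((1 - alphaTilde α y) / (1 - y)) ^ (2 / p) =
      (1 + a) ^ (-2 / p) * (1 - y) ^ (-2 / p) := by
    rw [hcoef, Real.inv_rpow (by positivity), Real.mul_rpow h1a.le h1y.le, mul_inv,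
      ← Real.rpow_neg h1a.le, ← Real.rpow_neg h1y.le, neg_div]
  rw [hrpow]
  simp only [Gop, Ginv, ← ha_def]
  have h2 : alphaTilde α y = a / (1 + a) := by simp only [alphaTilde, ← ha_def]
  rw [h2, div_eq_mul_inv]
  push_cast
  ring
end

section
/- Suppose a,b ∈ SO(ℝ₊), α is a slowly oscillating shift, 1 < p < ∞, and inf_{t>0}|a(t)| > 0 together with liminf_{t→s}(|a(t)| − |b(t)| (α'(t))^{−1/p}) > 0 for s ∈ {0,∞}. Then the operator aI − bW_α is invertible on L^p(0,∞) with inverse (aI − bW_α)^{−1} = Σ_{n=0}^∞ (a^{−1} b W_α)^n a^{−1} I, the series converging in operator norm. -/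
open Filter Set MeasureTheory

private lemma lintegral_image_1d {s : Set ℝ} {f f' : ℝ → ℝ}
    (hs : MeasurableSet s) (hf' : ∀ x ∈ s, HasDerivWithinAt f (f' x) s x)
    (hf : Set.InjOn f s) (g : ℝ → ENNReal) :
    ∫⁻ x in f '' s, g x = ∫⁻ x in s, ENNReal.ofReal |f' x| * g (f x) := by
  simpa only [ContinuousLinearMap.det_toSpanSingleton] using
    MeasureTheory.lintegral_image_eq_lintegral_abs_det_fderiv_mul volume hs
      (fun x hx => (hf' x hx).hasFDerivWithinAt) hf g

private lemma visits_card_le (g : ℕ → ℝ) (mm MM d : ℝ) (hd : 0 < d)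
    (hanti : ∀ k, g (k + 1) ≤ g k)
    (hstep : ∀ k, g k ∈ Set.Icc mm MM → g (k + 1) ≤ g k - d) (n : ℕ) :
    ((Finset.range n).filter (fun k => g k ∈ Set.Icc mm MM)).card
      ≤ Nat.floor ((MM - mm) / d) + 1 := by
  classical
  set S := (Finset.range n).filter (fun k => g k ∈ Set.Icc mm MM) with hS
  rcases S.eq_empty_or_nonempty with h | h
  · simp [h]
  · have hga : Antitone g := antitone_nat_of_succ_le hanti
    set k₁ := S.min' h with hk₁
    have hk₁S : k₁ ∈ S := S.min'_mem h
    have hk₁Icc : g k₁ ∈ Set.Icc mm MM := (Finset.mem_filter.mp hk₁S).2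
    have key : ∀ k ∈ S, k ≤ k₁ + Nat.floor ((MM - mm) / d) := by
      intro k hk
      have hk₁k : k₁ ≤ k := S.min'_le k hk
      have hkIcc : g k ∈ Set.Icc mm MM := (Finset.mem_filter.mp hk).2
      have step : ∀ m : ℕ, k₁ + m ≤ k → (m : ℝ) * d ≤ g k₁ - g (k₁ + m) := by
        intro m
        induction m with
        | zero => intro _; simp
        | succ m ih =>
          intro hm
          have hm' : k₁ + m ≤ k := by omega
          have h1 := ih hm'
          have hmem : g (k₁ + m) ∈ Set.Icc mm MM := by
            constructor
            · exact le_trans hkIcc.1 (hga hm')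
            · exact le_trans (hga (Nat.le_add_right k₁ m)) hk₁Icc.2
          have h2 := hstep (k₁ + m) hmem
          have he : (↑(m + 1) : ℝ) * d = (m : ℝ) * d + d := by push_cast; ring
          rw [he]
          have he2 : k₁ + (m + 1) = (k₁ + m) + 1 := by omega
          rw [he2]
          linarith
      have h3 := step (k - k₁) (by omega)
      have h4 : ((k - k₁ : ℕ) : ℝ) * d ≤ MM - mm := by
        have he : k₁ + (k - k₁) = k := by omega
        rw [he] at h3
        linarith [hk₁Icc.2, hkIcc.1]
      have h5 : ((k - k₁ : ℕ) : ℝ) ≤ (MM - mm) / d := by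
        rw [le_div_iff₀ hd]; exact h4
      have h6 : k - k₁ ≤ Nat.floor ((MM - mm) / d) := Nat.le_floor h5
      omega
    have hsub : S ⊆ Finset.Icc k₁ (k₁ + Nat.floor ((MM - mm) / d)) := by
      intro k hk
      rw [Finset.mem_Icc]
      exact ⟨S.min'_le k hk, key k hk⟩
    calc S.card ≤ (Finset.Icc k₁ (k₁ + Nat.floor ((MM - mm) / d))).card :=
          Finset.card_le_card hsub
      _ = Nat.floor ((MM - mm) / d) + 1 := by rw [Nat.card_Icc]; omega

private lemma prod_le_pow_card_real {s : Finset ℕ} {f : ℕ → ℝ} {M : ℝ}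
    (h0 : ∀ i ∈ s, 0 ≤ f i) (h1 : ∀ i ∈ s, f i ≤ M) :
    ∏ i ∈ s, f i ≤ M ^ s.card := by
  calc ∏ i ∈ s, f i ≤ ∏ _i ∈ s, M := Finset.prod_le_prod h0 h1
    _ = M ^ s.card := Finset.prod_const M

set_option maxHeartbeats 4000000 in
/-- Invertibility of the binomial functional operator `aI - bW_α` on `L^p(0,∞)`
under condition (1.2), with the inverse given by the Neumann series. -/
theorem binomial_functional_operator_invertible
    (p : ℝ) (hp : 1 < p) [Fact (1 ≤ ENNReal.ofReal p)]
    (μ : Measure ℝ) (hμ : μ = volume.restrict (Set.Ioi 0))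
    (a b : ℝ → ℂ) (α α' : ℝ → ℝ)
    (ha : SO a) (hb : SO b)
    (hbij : Set.BijOn α (Set.Ioi 0) (Set.Ioi 0))
    (hmono : StrictMonoOn α (Set.Ioi 0))
    (hderiv : ∀ t ∈ Set.Ioi (0:ℝ), HasDerivAt α (α' t) t)
    (h0 : Tendsto α (nhdsWithin 0 (Set.Ioi 0)) (nhds 0))
    (hinf : Tendsto α atTop atTop)
    (hfix : ∀ t ∈ Set.Ioi (0:ℝ), α t ≠ t)
    (hlog_bdd : ∃ C, ∀ t ∈ Set.Ioi (0:ℝ), |Real.log (α' t)| ≤ C)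
    (hso : SO α')
    -- the ellipticity conditions (1.2):
    (hinfa : ∃ ε > (0:ℝ), ∀ t ∈ Set.Ioi (0:ℝ), ε ≤ ‖a t‖)
    (hliminf0 : 0 < Filter.liminf
      (fun t => ‖a t‖ - ‖b t‖ * (α' t) ^ (-(1/p)))
      (nhdsWithin 0 (Set.Ioi 0)))
    (hliminf_inf : 0 < Filter.liminf
      (fun t => ‖a t‖ - ‖b t‖ * (α' t) ^ (-(1/p))) atTop)
    -- the operators on `L^p(0,∞)`:
    (Ma Mb Minv W : Lp ℂ (ENNReal.ofReal p) μ →L[ℂ] Lp ℂ (ENNReal.ofReal p) μ)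
    (hMa : ∀ f : Lp ℂ (ENNReal.ofReal p) μ, (Ma f : ℝ → ℂ) =ᵐ[μ] fun t => a t * f t)
    (hMb : ∀ f : Lp ℂ (ENNReal.ofReal p) μ, (Mb f : ℝ → ℂ) =ᵐ[μ] fun t => b t * f t)
    (hMinv : ∀ f : Lp ℂ (ENNReal.ofReal p) μ,
      (Minv f : ℝ → ℂ) =ᵐ[μ] fun t => (a t)⁻¹ * f t)
    (hW : ∀ f : Lp ℂ (ENNReal.ofReal p) μ, (W f : ℝ → ℂ) =ᵐ[μ] fun t => f (α t)) :
    ∃ B : Lp ℂ (ENNReal.ofReal p) μ →L[ℂ] Lp ℂ (ENNReal.ofReal p) μ,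
      HasSum (fun n : ℕ => (Minv * (Mb * W)) ^ n * Minv) B ∧
      (Ma - Mb * W) * B = 1 ∧ B * (Ma - Mb * W) = 1 := by
  classical
  subst hμ
  obtain ⟨εa, hεa, hainf⟩ := hinfa
  obtain ⟨Ca, hCa⟩ := ha.2.1
  obtain ⟨Cb, hCb⟩ := hb.2.1
  obtain ⟨Cα, hCα⟩ := hlog_bdd
  have hp0 : (0:ℝ) < p := lt_trans one_pos hp
  have hpne : p ≠ 0 := ne_of_gt hp0
  have hq0 : ENNReal.ofReal p ≠ 0 := by
    simp [ENNReal.ofReal_eq_zero, not_le, hp0]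
  have hqtop : ENNReal.ofReal p ≠ ⊤ := ENNReal.ofReal_ne_top
  have hqreal : (ENNReal.ofReal p).toReal = p := ENNReal.toReal_ofReal hp0.le
  have hCb0 : 0 ≤ Cb := le_trans (norm_nonneg _) (hCb 1 (by norm_num))
  have hCα0 : 0 ≤ Cα := le_trans (abs_nonneg _) (hCα 1 (by norm_num))
  -- continuity of α and α'
  have hαcont : ContinuousOn α (Set.Ioi 0) := fun t ht =>
    (hderiv t ht).continuousAt.continuousWithinAt
  have hα'cont : ContinuousOn α' (Set.Ioi 0) := hso.1
  -- lower and upper bounds for α'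
  have hα'lb : ∀ t ∈ Set.Ioi (0:ℝ), Real.exp (-Cα) ≤ α' t := by
    have hno : ∀ t ∈ Set.Ioi (0:ℝ), ¬(0 < α' t ∧ α' t < Real.exp (-Cα)) := by
      rintro t ht ⟨h1, h2⟩
      have hlog : Real.log (α' t) < -Cα := by
        have := Real.log_lt_log h1 h2
        rwa [Real.log_exp] at this
      have h3 := hCα t ht
      rw [abs_le] at h3
      linarith [h3.1]
    intro t ht
    by_contra hlt
    push_neg at hlt
    have hpos : 0 < α' t := by
      by_contra hle
      push_neg at hle
      obtain ⟨ξ, hξ, hξval⟩ := exists_hasDerivAt_eq_slope α α' (show t < t + 1 by linarith)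
        (hαcont.mono (fun x hx => lt_of_lt_of_le ht hx.1))
        (fun x hx => hderiv x (lt_trans ht hx.1))
      have hξ0 : ξ ∈ Set.Ioi (0:ℝ) := lt_trans ht hξ.1
      have hξpos : 0 < α' ξ := by
        rw [hξval]
        apply div_pos _ (by linarith)
        have := hmono ht (show t + 1 ∈ Set.Ioi (0:ℝ) by exact lt_trans (show (0:ℝ) < t from ht) (by linarith))
          (by linarith)
        linarith
      set y := min (α' ξ) (Real.exp (-Cα) / 2) with hydef
      have hy1 : 0 < y := lt_min hξpos (by positivity)
      have hy2 : y < Real.exp (-Cα) := lt_of_le_of_lt (min_le_right _ _)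
        (by linarith [Real.exp_pos (-Cα)])
      have hy3 : y ≤ α' ξ := min_le_left _ _
      have hIccsub' : Set.Icc t ξ ⊆ Set.Ioi (0:ℝ) := fun x hx => lt_of_lt_of_le ht hx.1
      obtain ⟨τ, hτmem, hτval⟩ := intermediate_value_Icc hξ.1.le (hα'cont.mono hIccsub')
        (show y ∈ Set.Icc (α' t) (α' ξ) from ⟨le_trans hle hy1.le, hy3⟩)
      exact hno τ (hIccsub' hτmem) ⟨hτval ▸ hy1, hτval ▸ hy2⟩
    exact hno t ht ⟨hpos, hlt⟩
  have hα'pos : ∀ t ∈ Set.Ioi (0:ℝ), 0 < α' t := fun t ht =>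
    lt_of_lt_of_le (Real.exp_pos _) (hα'lb t ht)
  -- iterates of α
  have hiter_mem : ∀ (n : ℕ), ∀ t ∈ Set.Ioi (0:ℝ), α^[n] t ∈ Set.Ioi (0:ℝ) := by
    intro n
    induction n with
    | zero => intro t ht; simpa using ht
    | succ n ih =>
      intro t ht
      rw [Function.iterate_succ_apply']
      exact hbij.mapsTo (ih t ht)
  have hiter_deriv : ∀ (n : ℕ), ∀ t ∈ Set.Ioi (0:ℝ),
      HasDerivAt (α^[n]) (∏ k ∈ Finset.range n, α' (α^[k] t)) t := by
    intro n
    induction n with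
    | zero =>
      intro t ht
      simpa using hasDerivAt_id t
    | succ n ih =>
      intro t ht
      have h1 := ih t ht
      have h2 := hderiv (α^[n] t) (hiter_mem n t ht)
      have h3 := HasDerivAt.comp t h2 h1
      rw [Function.iterate_succ']
      rw [Finset.prod_range_succ, mul_comm (∏ k ∈ Finset.range n, α' (α^[k] t))]
      exact h3
  have hiter_bij : ∀ n : ℕ, Set.BijOn (α^[n]) (Set.Ioi 0) (Set.Ioi 0) := by
    intro n
    induction n with
    | zero => simpa using Set.bijOn_id (Set.Ioi (0:ℝ))
    | succ n ih =>
      rw [Function.iterate_succ']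
      exact hbij.comp ih
  -- transfer of null sets through α
  have hmeasα : ∀ B : Set ℝ, MeasurableSet B →
      MeasurableSet (Set.Ioi (0:ℝ) ∩ α ⁻¹' B) := by
    intro B hB
    have hc : Continuous ((Set.Ioi (0:ℝ)).restrict α) := hαcont.restrict
    have heq : Set.Ioi (0:ℝ) ∩ α ⁻¹' B
        = Subtype.val '' (((Set.Ioi (0:ℝ)).restrict α) ⁻¹' B) := by
      ext x
      constructor
      · rintro ⟨hx1, hx2⟩
        exact ⟨⟨x, hx1⟩, hx2, rfl⟩
      · rintro ⟨⟨y, hy⟩, hy2, rfl⟩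
        exact ⟨hy, hy2⟩
    rw [heq]
    exact MeasurableSet.subtype_image measurableSet_Ioi (hc.measurable hB)
  have htransfer : ∀ {g h : ℝ → ℂ}, g =ᵐ[volume.restrict (Set.Ioi 0)] h →
      (fun t => g (α t)) =ᵐ[volume.restrict (Set.Ioi 0)] (fun t => h (α t)) := by
    intro g h hgh
    have hnull : volume.restrict (Set.Ioi 0) {x | ¬ g x = h x} = 0 := ae_iff.mp hgh
    obtain ⟨N', hNsub, hNmeas, hNnull⟩ := exists_measurable_superset_of_null hnull
    have hNnull' : volume (N' ∩ Set.Ioi 0) = 0 := by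
      rwa [Measure.restrict_apply' measurableSet_Ioi] at hNnull
    set N2 := N' ∩ Set.Ioi (0:ℝ) with hN2def
    have hN2meas : MeasurableSet N2 := hNmeas.inter measurableSet_Ioi
    set S := Set.Ioi (0:ℝ) ∩ α ⁻¹' N2 with hSdef
    have hSmeas : MeasurableSet S := hmeasα N2 hN2meas
    have hSsub : S ⊆ Set.Ioi 0 := Set.inter_subset_left
    have himS : α '' S ⊆ N2 := by rintro _ ⟨x, hx, rfl⟩; exact hx.2
    have hvolim : volume (α '' S) = 0 := measure_mono_null himS hNnull'
    have hcv := lintegral_image_1d hSmeas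
      (fun x hx => (hderiv x (hSsub hx)).hasDerivWithinAt)
      (hmono.injOn.mono hSsub) (fun _ => (1 : ENNReal))
    have hL : ∫⁻ _x in α '' S, (1 : ENNReal) = 0 := by
      rw [setLIntegral_one]; exact hvolim
    have hR : ∫⁻ x in S, ENNReal.ofReal |α' x| * 1 = 0 := by rw [← hcv]; exact hL
    have hge : ENNReal.ofReal (Real.exp (-Cα)) * volume S
        ≤ ∫⁻ x in S, ENNReal.ofReal |α' x| * 1 := by
      rw [← setLIntegral_const S (ENNReal.ofReal (Real.exp (-Cα)))]
      apply lintegral_mono_ae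
      filter_upwards [ae_restrict_mem hSmeas] with x hx
      rw [mul_one]
      apply ENNReal.ofReal_le_ofReal
      rw [abs_of_pos (hα'pos x (hSsub hx))]
      exact hα'lb x (hSsub hx)
    have hvolS : volume S = 0 := by
      have h1 : ENNReal.ofReal (Real.exp (-Cα)) * volume S = 0 := le_antisymm
        (hge.trans_eq hR) zero_le
      rcases mul_eq_zero.mp h1 with h2 | h2
      · exact absurd h2 (by simp [ENNReal.ofReal_eq_zero, Real.exp_pos, not_le])
      · exact h2
    rw [Filter.EventuallyEq, ae_iff, Measure.restrict_apply' measurableSet_Ioi]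
    apply measure_mono_null _ hvolS
    rintro x ⟨hx1, hx2⟩
    refine ⟨hx2, ?_⟩
    exact ⟨hNsub hx1, hbij.mapsTo hx2⟩
  -- the contraction function
  set cf : ℝ → ℝ := fun t => ‖(a t)⁻¹ * b t‖ * (α' t) ^ (-(1/p)) with hcfdef
  have hcf_nonneg : ∀ t ∈ Set.Ioi (0:ℝ), 0 ≤ cf t := fun t ht =>
    mul_nonneg (norm_nonneg _) (Real.rpow_nonneg (hα'pos t ht).le _)
  set Mx : ℝ := max (εa⁻¹ * Cb * Real.exp (Cα * (1/p))) 1 with hMxdef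
  have hMx1 : (1:ℝ) ≤ Mx := le_max_right _ _
  have hrpow_ub : ∀ t ∈ Set.Ioi (0:ℝ), (α' t) ^ (-(1/p)) ≤ Real.exp (Cα * (1/p)) := by
    intro t ht
    calc (α' t) ^ (-(1/p)) ≤ (Real.exp (-Cα)) ^ (-(1/p)) :=
        Real.rpow_le_rpow_of_nonpos (Real.exp_pos _) (hα'lb t ht)
          (by rw [neg_nonpos]; positivity)
      _ = Real.exp (Cα * (1/p)) := by
        rw [← Real.exp_mul]; ring_nf
  have hcf_le : ∀ t ∈ Set.Ioi (0:ℝ), cf t ≤ Mx := by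
    intro t ht
    have h1 : ‖(a t)⁻¹ * b t‖ ≤ εa⁻¹ * Cb := by
      rw [norm_mul, norm_inv]
      apply mul_le_mul _ (hCb t ht) (norm_nonneg _) (by positivity)
      exact inv_anti₀ hεa (hainf t ht)
    calc cf t ≤ (εa⁻¹ * Cb) * Real.exp (Cα * (1/p)) := by
          apply mul_le_mul h1 (hrpow_ub t ht)
            (Real.rpow_nonneg (hα'pos t ht).le _) (by positivity)
      _ ≤ Mx := le_max_left _ _
  -- the small region: there exist 0 < mm ≤ MM and ρ ∈ [1/2, 1) with cf ≤ ρ off [mm, MM]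
  obtain ⟨mm, MM, ρ, hmm0, hmmMM, hρh, hρ1, hcf_small⟩ :
      ∃ mm MM ρ : ℝ, 0 < mm ∧ mm ≤ MM ∧ (1/2 : ℝ) ≤ ρ ∧ ρ < 1 ∧
        ∀ t ∈ Set.Ioi (0:ℝ), t ∉ Set.Icc mm MM → cf t ≤ ρ := by
    set ell : ℝ → ℝ := fun t => ‖a t‖ - ‖b t‖ * (α' t) ^ (-(1/p)) with helldef
    have hellb : ∀ t ∈ Set.Ioi (0:ℝ), -(Cb * Real.exp (Cα * (1/p))) ≤ ell t := by
      intro t ht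
      have h1 : ‖b t‖ * (α' t) ^ (-(1/p)) ≤ Cb * Real.exp (Cα * (1/p)) :=
        mul_le_mul (hCb t ht) (hrpow_ub t ht)
          (Real.rpow_nonneg (hα'pos t ht).le _) hCb0
      have h2 : (0:ℝ) ≤ ‖a t‖ := norm_nonneg _
      simp only [helldef]
      linarith
    -- near 0
    have hbdd0 : Filter.IsBoundedUnder (· ≥ ·) (nhdsWithin 0 (Set.Ioi 0)) ell := by
      refine ⟨-(Cb * Real.exp (Cα * (1/p))), Filter.eventually_map.mpr ?_⟩
      filter_upwards [self_mem_nhdsWithin] with t ht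
      exact hellb t ht
    have hev0 : ∀ᶠ t in nhdsWithin 0 (Set.Ioi 0),
        Filter.liminf ell (nhdsWithin 0 (Set.Ioi 0)) / 2 < ell t :=
      Filter.eventually_lt_of_lt_liminf (by linarith) hbdd0
    set δ0 := Filter.liminf ell (nhdsWithin 0 (Set.Ioi 0)) / 2 with hδ0def
    have hδ0pos : 0 < δ0 := by positivity
    obtain ⟨m1, hm1pos, hm1⟩ := mem_nhdsGT_iff_exists_Ioc_subset.mp hev0
    -- near ∞
    have hbddinf : Filter.IsBoundedUnder (· ≥ ·) atTop ell := by
      refine ⟨-(Cb * Real.exp (Cα * (1/p))), Filter.eventually_map.mpr ?_⟩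
      filter_upwards [eventually_gt_atTop (0:ℝ)] with t ht
      exact hellb t ht
    have hevinf : ∀ᶠ t in atTop, Filter.liminf ell atTop / 2 < ell t :=
      Filter.eventually_lt_of_lt_liminf (by linarith) hbddinf
    set δinf := Filter.liminf ell atTop / 2 with hδinfdef
    have hδinfpos : 0 < δinf := by positivity
    obtain ⟨M1, hM1⟩ := Filter.eventually_atTop.mp hevinf
    set M1' := max M1 1 with hM1'def
    set δ := min δ0 δinf with hδdef
    have hδpos : 0 < δ := lt_min hδ0pos hδinfpos
    set Ca' := max Ca δ with hCa'def
    have hCa'pos : 0 < Ca' := lt_of_lt_of_le hδpos (le_max_right _ _)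
    have hδCa' : δ ≤ Ca' := le_max_right _ _
    refine ⟨min m1 M1', max m1 M1', max (1 - δ / Ca') (1/2),
      lt_min hm1pos (by positivity), min_le_max, le_max_right _ _, ?_, ?_⟩
    · apply max_lt _ (by norm_num)
      have : 0 < δ / Ca' := by positivity
      linarith
    · intro t ht hnot
      have hdel : δ ≤ ell t := by
        rw [Set.mem_Icc, not_and_or] at hnot
        push_neg at hnot
        rcases hnot with h | h
        · have h1 : t < m1 := lt_of_lt_of_le h (min_le_left _ _)
          have := hm1 ⟨ht, h1.le⟩
          exact le_trans (min_le_left _ _) this.le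
        · have h1 : M1' < t := lt_of_le_of_lt (le_max_right _ _) h
          have h2 : M1 ≤ t := le_trans (le_max_left _ _) h1.le
          exact le_trans (min_le_right _ _) (hM1 t h2).le
      have hapos : (0:ℝ) < ‖a t‖ := lt_of_lt_of_le hεa (hainf t ht)
      have haCa' : ‖a t‖ ≤ Ca' := le_trans (hCa t ht) (le_max_left _ _)
      have hble : ‖b t‖ * (α' t) ^ (-(1/p)) ≤ ‖a t‖ - δ := by
        simp only [helldef] at hdel; linarith
      have hcfe : cf t = (‖b t‖ * (α' t) ^ (-(1/p))) / ‖a t‖ := by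
        simp only [hcfdef, norm_mul, norm_inv]
        ring
      rw [hcfe]
      rw [div_le_iff₀ hapos]
      have hkey : ‖a t‖ - δ ≤ (1 - δ / Ca') * ‖a t‖ := by
        rw [sub_mul, one_mul]
        have h5 : δ / Ca' * ‖a t‖ ≤ δ / Ca' * Ca' :=
          mul_le_mul_of_nonneg_left haCa' (by positivity)
        rw [div_mul_cancel₀ _ (ne_of_gt hCa'pos)] at h5
        linarith
      calc ‖b t‖ * (α' t) ^ (-(1/p)) ≤ ‖a t‖ - δ := hble
        _ ≤ (1 - δ / Ca') * ‖a t‖ := hkey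
        _ ≤ max (1 - δ / Ca') (1/2) * ‖a t‖ :=
            mul_le_mul_of_nonneg_right (le_max_left _ _) hapos.le
  have hρ0 : (0:ℝ) < ρ := lt_of_lt_of_le (by norm_num) hρh
  have hIccsub : Set.Icc mm MM ⊆ Set.Ioi (0:ℝ) := fun x hx => lt_of_lt_of_le hmm0 hx.1
  -- counting visits
  obtain ⟨N, hN⟩ : ∃ N : ℕ, ∀ t ∈ Set.Ioi (0:ℝ), ∀ n : ℕ,
      ((Finset.range n).filter (fun k => α^[k] t ∈ Set.Icc mm MM)).card ≤ N := by
    -- the minimum displacement on the compact middle region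
    have hconts : ContinuousOn (fun s => |α s - s|) (Set.Icc mm MM) :=
      ((hαcont.mono hIccsub).sub continuousOn_id).abs
    obtain ⟨s₀, hs₀mem, hs₀min⟩ := isCompact_Icc.exists_isMinOn
      ⟨mm, Set.mem_Icc.mpr ⟨le_refl _, hmmMM⟩⟩ hconts
    set d := |α s₀ - s₀| with hddef
    have hdpos : 0 < d := abs_pos.mpr (sub_ne_zero.mpr (hfix s₀ (hIccsub hs₀mem)))
    have hdle : ∀ s ∈ Set.Icc mm MM, d ≤ |α s - s| := fun s hs =>
      isMinOn_iff.mp hs₀min s hs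
    -- dichotomy: either α t < t on all of (0,∞), or α t > t
    have hdich : (∀ t ∈ Set.Ioi (0:ℝ), α t < t) ∨ (∀ t ∈ Set.Ioi (0:ℝ), t < α t) := by
      have key : ∀ t1 ∈ Set.Ioi (0:ℝ), ∀ t2 ∈ Set.Ioi (0:ℝ),
          α t1 < t1 → t2 < α t2 → False := by
        intro t1 ht1 t2 ht2 h1 h2
        have hsub : Set.uIcc t1 t2 ⊆ Set.Ioi (0:ℝ) := by
          intro x hx
          have := hx.1
          exact lt_of_lt_of_le (lt_min ht1 ht2) this
        have hgc : ContinuousOn (fun t => α t - t) (Set.uIcc t1 t2) :=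
          (hαcont.mono hsub).sub continuousOn_id
        have h0mem : (0:ℝ) ∈ Set.uIcc (α t1 - t1) (α t2 - t2) := by
          rw [Set.mem_uIcc]
          left
          constructor <;> linarith
        obtain ⟨τ, hτ, hτ0⟩ := intermediate_value_uIcc hgc h0mem
        have hτ0' : α τ - τ = 0 := hτ0
        exact hfix τ (hsub hτ) (by linarith)
      by_cases hc : ∀ t ∈ Set.Ioi (0:ℝ), α t < t
      · exact Or.inl hc
      · right
        push_neg at hc
        obtain ⟨t2, ht2, hge⟩ := hc
        have h2 : t2 < α t2 := lt_of_le_of_ne hge (Ne.symm (hfix t2 ht2))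
        intro t ht
        rcases lt_trichotomy (α t) t with h | h | h
        · exact (key t ht t2 ht2 h h2).elim
        · exact absurd h (hfix t ht)
        · exact h
      
    refine ⟨Nat.floor ((MM - mm) / d) + 1, ?_⟩
    intro t ht n
    rcases hdich with hdec | hinc
    · apply visits_card_le (fun k => α^[k] t) mm MM d hdpos
      · intro k
        rw [Function.iterate_succ_apply']
        exact (hdec _ (hiter_mem k t ht)).le
      · intro k hkmem
        rw [Function.iterate_succ_apply']
        have h1 : α (α^[k] t) < α^[k] t := hdec _ (hiter_mem k t ht)
        have h2 := hdle _ hkmem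
        rw [abs_of_neg (by linarith)] at h2
        linarith
    · have hfilter : ∀ k, (α^[k] t ∈ Set.Icc mm MM)
          = (-(α^[k] t) ∈ Set.Icc (-MM) (-mm)) := by
        intro k
        apply propext
        simp only [Set.mem_Icc]
        constructor <;> (rintro ⟨h1, h2⟩; constructor <;> linarith)
      have hrw : ((Finset.range n).filter (fun k => α^[k] t ∈ Set.Icc mm MM))
          = ((Finset.range n).filter (fun k => -(α^[k] t) ∈ Set.Icc (-MM) (-mm))) := by
        apply Finset.filter_congr
        intro k _
        rw [hfilter k]
      rw [hrw]
      have hbound := visits_card_le (fun k => -(α^[k] t)) (-MM) (-mm) d hdpos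
        (by
          intro k
          show -(α^[k+1] t) ≤ -(α^[k] t)
          rw [Function.iterate_succ_apply']
          have := hinc _ (hiter_mem k t ht)
          linarith)
        (by
          intro k hkmem
          show -(α^[k+1] t) ≤ -(α^[k] t) - d
          rw [Function.iterate_succ_apply']
          have hmem' : α^[k] t ∈ Set.Icc mm MM := by
            rw [hfilter k]; exact hkmem
          have h1 : α^[k] t < α (α^[k] t) := hinc _ (hiter_mem k t ht)
          have h2 := hdle _ hmem'
          rw [abs_of_pos (by linarith)] at h2
          linarith) n
      have : (-mm - -MM) = MM - mm := by ring
      rwa [this] at hbound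
  -- the product bound
  set K0 : ℝ := Mx ^ N * (ρ ^ N)⁻¹ with hK0def
  have hK0pos : 0 < K0 := by positivity
  have hprodb : ∀ t ∈ Set.Ioi (0:ℝ), ∀ n : ℕ,
      ∏ k ∈ Finset.range n, cf (α^[k] t) ≤ K0 * ρ ^ n := by
    intro t ht n
    set S := (Finset.range n).filter (fun k => α^[k] t ∈ Set.Icc mm MM) with hSdef
    set G := (Finset.range n).filter (fun k => ¬ α^[k] t ∈ Set.Icc mm MM) with hGdef
    have hsplit : (∏ k ∈ S, cf (α^[k] t)) * (∏ k ∈ G, cf (α^[k] t))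
        = ∏ k ∈ Finset.range n, cf (α^[k] t) :=
      Finset.prod_filter_mul_prod_filter_not (Finset.range n) _ _
    have hScard : S.card ≤ N := hN t ht n
    have hcards : S.card + G.card = n := by
      rw [hSdef, hGdef]
      rw [Finset.card_filter_add_card_filter_not]
      · exact Finset.card_range n
    have hSbound : ∏ k ∈ S, cf (α^[k] t) ≤ Mx ^ N := by
      calc ∏ k ∈ S, cf (α^[k] t) ≤ Mx ^ S.card :=
            prod_le_pow_card_real
              (fun k _ => hcf_nonneg _ (hiter_mem k t ht))
              (fun k _ => hcf_le _ (hiter_mem k t ht))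
        _ ≤ Mx ^ N := pow_le_pow_right₀ (by linarith) hScard
    have hGbound : ∏ k ∈ G, cf (α^[k] t) ≤ ρ ^ G.card := by
      apply prod_le_pow_card_real
        (fun k _ => hcf_nonneg _ (hiter_mem k t ht))
      intro k hk
      rw [hGdef, Finset.mem_filter] at hk
      exact hcf_small _ (hiter_mem k t ht) hk.2
    have hρpow : ρ ^ G.card ≤ ρ ^ n * (ρ ^ N)⁻¹ := by
      have h1 : ρ ^ G.card * ρ ^ S.card = ρ ^ n := by
        rw [← pow_add]
        congr 1
        omega
      have h2 : ρ ^ N ≤ ρ ^ S.card :=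
        pow_le_pow_of_le_one hρ0.le hρ1.le hScard
      have h4 : (1:ℝ) ≤ ρ ^ S.card * (ρ ^ N)⁻¹ := by
        rw [← div_eq_mul_inv, le_div_iff₀ (by positivity)]
        simpa using h2
      calc ρ ^ G.card = ρ ^ G.card * 1 := (mul_one _).symm
        _ ≤ ρ ^ G.card * (ρ ^ S.card * (ρ ^ N)⁻¹) :=
            mul_le_mul_of_nonneg_left h4 (by positivity)
        _ = ρ ^ n * (ρ ^ N)⁻¹ := by rw [← mul_assoc, h1]
    calc ∏ k ∈ Finset.range n, cf (α^[k] t)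
        = (∏ k ∈ S, cf (α^[k] t)) * (∏ k ∈ G, cf (α^[k] t)) := hsplit.symm
      _ ≤ Mx ^ N * (ρ ^ n * (ρ ^ N)⁻¹) := by
          apply mul_le_mul hSbound (le_trans hGbound hρpow)
            (Finset.prod_nonneg fun k _ => hcf_nonneg _ (hiter_mem k t ht))
            (by positivity)
      _ = K0 * ρ ^ n := by rw [hK0def]; ring
  -- basic operator identities
  have hane : ∀ᵐ t ∂(volume.restrict (Set.Ioi 0)), a t ≠ 0 := by
    filter_upwards [ae_restrict_mem measurableSet_Ioi] with t ht
    intro hc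
    have := hainf t ht
    rw [hc, norm_zero] at this
    linarith
  have hMaMinv : Ma * Minv = 1 := by
    apply ContinuousLinearMap.ext
    intro f
    apply Lp.ext
    have h1 : ((Ma * Minv) f : ℝ → ℂ) = (Ma (Minv f) : ℝ → ℂ) := by
      rw [ContinuousLinearMap.mul_apply]
    rw [h1]
    have h2 := hMa (Minv f)
    have h3 : (fun t => a t * (Minv f : ℝ → ℂ) t)
        =ᵐ[volume.restrict (Set.Ioi 0)] fun t => a t * ((a t)⁻¹ * (f : ℝ → ℂ) t) :=
      (Filter.EventuallyEq.refl _ _).mul (hMinv f)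
    refine (h2.trans h3).trans ?_
    filter_upwards [hane] with t hta
    rw [ContinuousLinearMap.one_apply, ← mul_assoc, mul_inv_cancel₀ hta, one_mul]
  have hMinvMa : Minv * Ma = 1 := by
    apply ContinuousLinearMap.ext
    intro f
    apply Lp.ext
    have h1 : ((Minv * Ma) f : ℝ → ℂ) = (Minv (Ma f) : ℝ → ℂ) := by
      rw [ContinuousLinearMap.mul_apply]
    rw [h1]
    have h2 := hMinv (Ma f)
    have h3 : (fun t => (a t)⁻¹ * (Ma f : ℝ → ℂ) t)
        =ᵐ[volume.restrict (Set.Ioi 0)] fun t => (a t)⁻¹ * (a t * (f : ℝ → ℂ) t) :=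
      (Filter.EventuallyEq.refl _ _).mul (hMa f)
    refine (h2.trans h3).trans ?_
    filter_upwards [hane] with t hta
    rw [ContinuousLinearMap.one_apply, ← mul_assoc, inv_mul_cancel₀ hta, one_mul]
  set A := Minv * (Mb * W) with hAdef
  -- pointwise description of A^n
  have hAn : ∀ (n : ℕ) (f : Lp ℂ (ENNReal.ofReal p) (volume.restrict (Set.Ioi 0))),
      ((A ^ n) f : ℝ → ℂ) =ᵐ[volume.restrict (Set.Ioi 0)]
        (fun t => (∏ k ∈ Finset.range n, ((a (α^[k] t))⁻¹ * b (α^[k] t)))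
          * (f : ℝ → ℂ) (α^[n] t)) := by
    intro n
    induction n with
    | zero =>
      intro f
      simp only [pow_zero, ContinuousLinearMap.one_apply, Finset.prod_range_zero,
        Function.iterate_zero, id_eq, one_mul]
      exact Filter.EventuallyEq.rfl
    | succ n ih =>
      intro f
      have h1 : ((A ^ (n+1)) f : ℝ → ℂ) = (A ((A ^ n) f) : ℝ → ℂ) := by
        rw [pow_succ', ContinuousLinearMap.mul_apply]
      rw [h1]
      set g := (A ^ n) f with hgdef
      have h2 : (A g : ℝ → ℂ) = (Minv (Mb (W g)) : ℝ → ℂ) := by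
        rw [hAdef, ContinuousLinearMap.mul_apply, ContinuousLinearMap.mul_apply]
      rw [h2]
      have h3 := hMinv (Mb (W g))
      have h4 : (fun t => (a t)⁻¹ * (Mb (W g) : ℝ → ℂ) t)
          =ᵐ[volume.restrict (Set.Ioi 0)]
          fun t => (a t)⁻¹ * (b t * (W g : ℝ → ℂ) t) := by
        filter_upwards [hMb (W g)] with t ht
        rw [ht]
      have h5 : (fun t => (a t)⁻¹ * (b t * (W g : ℝ → ℂ) t))
          =ᵐ[volume.restrict (Set.Ioi 0)]
          fun t => (a t)⁻¹ * (b t * (g : ℝ → ℂ) (α t)) := by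
        filter_upwards [hW g] with t ht
        rw [ht]
      have h6 : (fun t => (a t)⁻¹ * (b t * (g : ℝ → ℂ) (α t)))
          =ᵐ[volume.restrict (Set.Ioi 0)]
          fun t => (a t)⁻¹ * (b t *
            ((∏ k ∈ Finset.range n, ((a (α^[k] (α t)))⁻¹ * b (α^[k] (α t))))
              * (f : ℝ → ℂ) (α^[n] (α t)))) := by
        filter_upwards [htransfer (ih f)] with t ht
        have ht' : (g : ℝ → ℂ) (α t)
            = (∏ k ∈ Finset.range n, ((a (α^[k] (α t)))⁻¹ * b (α^[k] (α t))))
              * (f : ℝ → ℂ) (α^[n] (α t)) := ht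
        rw [ht']
      refine (((h3.trans h4).trans h5).trans h6).trans ?_
      apply Filter.EventuallyEq.of_eq
      funext t
      simp only [← Function.iterate_succ_apply]
      rw [Finset.prod_range_succ']
      simp only [Function.iterate_zero, id_eq]
      ring
  -- norm bound
  have hAnorm : ∀ n : ℕ, ‖A ^ n‖ ≤ K0 * ρ ^ n := by
    intro n
    have hKn : (0:ℝ) ≤ K0 * ρ ^ n := by positivity
    apply ContinuousLinearMap.opNorm_le_bound _ hKn
    intro f
    set F : ℝ → ℂ := fun t => (∏ k ∈ Finset.range n, ((a (α^[k] t))⁻¹ * b (α^[k] t)))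
      * (f : ℝ → ℂ) (α^[n] t) with hFdef
    set G : ℝ → ENNReal := fun s => (‖(f : ℝ → ℂ) s‖₊ : ENNReal) ^ p with hGdef
    -- pointwise bound
    have hae : ∀ᵐ t ∂(volume.restrict (Set.Ioi 0)),
        (‖F t‖₊ : ENNReal) ^ p ≤ ENNReal.ofReal ((K0 * ρ ^ n) ^ p)
          * (ENNReal.ofReal (∏ k ∈ Finset.range n, α' (α^[k] t)) * G (α^[n] t)) := by
      filter_upwards [ae_restrict_mem measurableSet_Ioi] with t ht
      set Dn := ∏ k ∈ Finset.range n, α' (α^[k] t) with hDndef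
      have hmemk : ∀ k, α^[k] t ∈ Set.Ioi (0:ℝ) := fun k => hiter_mem k t ht
      have hDpos : 0 < Dn := Finset.prod_pos fun k _ => hα'pos _ (hmemk k)
      have hFnorm : ‖F t‖ = (∏ k ∈ Finset.range n, ‖(a (α^[k] t))⁻¹ * b (α^[k] t)‖)
          * ‖(f : ℝ → ℂ) (α^[n] t)‖ := by
        rw [hFdef]; rw [norm_mul, norm_prod]
      have hck : ∀ k ∈ Finset.range n, ‖(a (α^[k] t))⁻¹ * b (α^[k] t)‖
          = cf (α^[k] t) * (α' (α^[k] t)) ^ (1/p) := by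
        intro k _
        have h1 : (0:ℝ) < α' (α^[k] t) := hα'pos _ (hmemk k)
        show _ = ‖(a (α^[k] t))⁻¹ * b (α^[k] t)‖ * (α' (α^[k] t)) ^ (-(1/p))
          * (α' (α^[k] t)) ^ (1/p)
        rw [mul_assoc, ← Real.rpow_add h1]
        norm_num
      have hprodnorm : ∏ k ∈ Finset.range n, ‖(a (α^[k] t))⁻¹ * b (α^[k] t)‖
          = (∏ k ∈ Finset.range n, cf (α^[k] t)) * Dn ^ (1/p) := by
        rw [Finset.prod_congr rfl hck, Finset.prod_mul_distrib,
          Real.finset_prod_rpow _ _ (fun k _ => (hα'pos _ (hmemk k)).le)]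
      have hc0 : 0 ≤ ∏ k ∈ Finset.range n, cf (α^[k] t) :=
        Finset.prod_nonneg fun k _ => hcf_nonneg _ (hmemk k)
      have hreal : ‖F t‖ ^ p
          ≤ (K0 * ρ ^ n) ^ p * (Dn * ‖(f : ℝ → ℂ) (α^[n] t)‖ ^ p) := by
        rw [hFnorm, hprodnorm]
        rw [Real.mul_rpow (mul_nonneg hc0 (Real.rpow_nonneg hDpos.le _)) (norm_nonneg _),
          Real.mul_rpow hc0 (Real.rpow_nonneg hDpos.le _),
          ← Real.rpow_mul hDpos.le]
        have he : 1 / p * p = 1 := by field_simp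
        rw [he, Real.rpow_one]
        have hPle : (∏ k ∈ Finset.range n, cf (α^[k] t)) ^ p ≤ (K0 * ρ ^ n) ^ p :=
          Real.rpow_le_rpow hc0 (hprodb t ht n) hp0.le
        calc (∏ k ∈ Finset.range n, cf (α^[k] t)) ^ p * Dn
              * ‖(f : ℝ → ℂ) (α^[n] t)‖ ^ p
            = (∏ k ∈ Finset.range n, cf (α^[k] t)) ^ p
              * (Dn * ‖(f : ℝ → ℂ) (α^[n] t)‖ ^ p) := by ring
          _ ≤ (K0 * ρ ^ n) ^ p * (Dn * ‖(f : ℝ → ℂ) (α^[n] t)‖ ^ p) := by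
              apply mul_le_mul_of_nonneg_right hPle
              positivity
      have e1 : (‖F t‖₊ : ENNReal) = ENNReal.ofReal ‖F t‖ :=
        (ofReal_norm _).symm
      have e2 : G (α^[n] t) = ENNReal.ofReal (‖(f : ℝ → ℂ) (α^[n] t)‖ ^ p) := by
        rw [hGdef]
        show ((‖(f : ℝ → ℂ) (α^[n] t)‖₊ : ENNReal)) ^ p = _
        rw [← enorm_eq_nnnorm, ← ofReal_norm,
          ENNReal.ofReal_rpow_of_nonneg (norm_nonneg _) hp0.le]
      rw [e1, e2, ENNReal.ofReal_rpow_of_nonneg (norm_nonneg _) hp0.le,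
        ← ENNReal.ofReal_mul hDpos.le, ← ENNReal.ofReal_mul (by positivity)]
      exact ENNReal.ofReal_le_ofReal hreal
    -- change of variables
    have hchange : ∫⁻ t in Set.Ioi 0,
        ENNReal.ofReal (∏ k ∈ Finset.range n, α' (α^[k] t)) * G (α^[n] t) ∂volume
        = ∫⁻ s in Set.Ioi 0, G s ∂volume := by
      have h1 : ∫⁻ t in Set.Ioi 0,
          ENNReal.ofReal (∏ k ∈ Finset.range n, α' (α^[k] t)) * G (α^[n] t) ∂volume
          = ∫⁻ t in Set.Ioi 0,
            ENNReal.ofReal |∏ k ∈ Finset.range n, α' (α^[k] t)| * G (α^[n] t) ∂volume := by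
        apply lintegral_congr_ae
        filter_upwards [ae_restrict_mem measurableSet_Ioi] with t ht
        have hDpos : 0 < ∏ k ∈ Finset.range n, α' (α^[k] t) :=
          Finset.prod_pos fun k _ => hα'pos _ (hiter_mem k t ht)
        rw [abs_of_pos hDpos]
      rw [h1, ← lintegral_image_1d measurableSet_Ioi
        (fun x hx => (hiter_deriv n x hx).hasDerivWithinAt)
        (hiter_bij n).injOn G, (hiter_bij n).image_eq]
    -- the integral estimate
    have hI : ∫⁻ t, (‖F t‖₊ : ENNReal) ^ p ∂(volume.restrict (Set.Ioi 0))
        ≤ ENNReal.ofReal ((K0 * ρ ^ n) ^ p)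
          * ∫⁻ s, G s ∂(volume.restrict (Set.Ioi 0)) := by
      calc ∫⁻ t, (‖F t‖₊ : ENNReal) ^ p ∂(volume.restrict (Set.Ioi 0))
          ≤ ∫⁻ t, ENNReal.ofReal ((K0 * ρ ^ n) ^ p)
              * (ENNReal.ofReal (∏ k ∈ Finset.range n, α' (α^[k] t)) * G (α^[n] t))
              ∂(volume.restrict (Set.Ioi 0)) := lintegral_mono_ae hae
        _ = ENNReal.ofReal ((K0 * ρ ^ n) ^ p)
            * ∫⁻ t, ENNReal.ofReal (∏ k ∈ Finset.range n, α' (α^[k] t)) * G (α^[n] t)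
              ∂(volume.restrict (Set.Ioi 0)) :=
            lintegral_const_mul' _ _ ENNReal.ofReal_ne_top
        _ = ENNReal.ofReal ((K0 * ρ ^ n) ^ p)
            * ∫⁻ s, G s ∂(volume.restrict (Set.Ioi 0)) := by rw [hchange]
    -- conclude via eLpNorm
    have hsnf : eLpNorm (f : ℝ → ℂ) (ENNReal.ofReal p) (volume.restrict (Set.Ioi 0))
        = (∫⁻ s, G s ∂(volume.restrict (Set.Ioi 0))) ^ (1/p) := by
      rw [eLpNorm_eq_lintegral_rpow_enorm_toReal hq0 hqtop, hqreal]
      rfl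
    have hmain : eLpNorm F (ENNReal.ofReal p) (volume.restrict (Set.Ioi 0))
        ≤ ENNReal.ofReal (K0 * ρ ^ n)
          * eLpNorm (f : ℝ → ℂ) (ENNReal.ofReal p) (volume.restrict (Set.Ioi 0)) := by
      rw [eLpNorm_eq_lintegral_rpow_enorm_toReal hq0 hqtop, hqreal, hsnf]
      calc (∫⁻ t, (‖F t‖₊ : ENNReal) ^ p ∂(volume.restrict (Set.Ioi 0))) ^ (1/p)
          ≤ (ENNReal.ofReal ((K0 * ρ ^ n) ^ p)
              * ∫⁻ s, G s ∂(volume.restrict (Set.Ioi 0))) ^ (1/p) :=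
            ENNReal.rpow_le_rpow hI (by positivity)
        _ = (ENNReal.ofReal ((K0 * ρ ^ n) ^ p)) ^ (1/p)
            * (∫⁻ s, G s ∂(volume.restrict (Set.Ioi 0))) ^ (1/p) :=
            ENNReal.mul_rpow_of_nonneg _ _ (by positivity)
        _ = ENNReal.ofReal (K0 * ρ ^ n)
            * (∫⁻ s, G s ∂(volume.restrict (Set.Ioi 0))) ^ (1/p) := by
            rw [← ENNReal.ofReal_rpow_of_nonneg hKn hp0.le, ← ENNReal.rpow_mul,
              mul_one_div, div_self hpne, ENNReal.rpow_one]
    have hne : ENNReal.ofReal (K0 * ρ ^ n)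
        * eLpNorm (f : ℝ → ℂ) (ENNReal.ofReal p) (volume.restrict (Set.Ioi 0)) ≠ ⊤ :=
      ENNReal.mul_ne_top ENNReal.ofReal_ne_top (Lp.eLpNorm_ne_top f)
    rw [Lp.norm_def, eLpNorm_congr_ae (hAn n f), ← hFdef]
    have hgoal : K0 * ρ ^ n * ‖f‖
        = (ENNReal.ofReal (K0 * ρ ^ n)
            * eLpNorm (f : ℝ → ℂ) (ENNReal.ofReal p) (volume.restrict (Set.Ioi 0))).toReal := by
      rw [ENNReal.toReal_mul, ENNReal.toReal_ofReal hKn, Lp.norm_def]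
    rw [hgoal]
    exact ENNReal.toReal_mono hne hmain
  -- summability
  have hsum : Summable (fun n : ℕ => A ^ n * Minv) := by
    apply Summable.of_norm_bounded (g := fun n => (K0 * ‖Minv‖) * ρ ^ n)
      (((summable_geometric_of_lt_one hρ0.le hρ1)).mul_left _)
    intro n
    calc ‖A ^ n * Minv‖ ≤ ‖A ^ n‖ * ‖Minv‖ := norm_mul_le _ _
      _ ≤ (K0 * ρ ^ n) * ‖Minv‖ :=
          mul_le_mul_of_nonneg_right (hAnorm n) (norm_nonneg _)
      _ = (K0 * ‖Minv‖) * ρ ^ n := by ring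
  have hAMn : ∀ n : ℕ, ‖A ^ n * Minv‖ ≤ (K0 * ‖Minv‖) * ρ ^ n := by
    intro n
    calc ‖A ^ n * Minv‖ ≤ ‖A ^ n‖ * ‖Minv‖ := norm_mul_le _ _
      _ ≤ (K0 * ρ ^ n) * ‖Minv‖ :=
          mul_le_mul_of_nonneg_right (hAnorm n) (norm_nonneg _)
      _ = (K0 * ‖Minv‖) * ρ ^ n := by ring
  have hgeom : Summable (fun n : ℕ => ρ ^ n) := summable_geometric_of_lt_one hρ0.le hρ1
  refine ⟨∑' n, A ^ n * Minv, hsum.hasSum, ?_, ?_⟩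
  · -- left inverse identity
    set u : ℕ → (Lp ℂ (ENNReal.ofReal p) (volume.restrict (Set.Ioi 0)) →L[ℂ]
        Lp ℂ (ENNReal.ofReal p) (volume.restrict (Set.Ioi 0))) :=
      fun n => Ma * (A ^ n * Minv) with hudef
    have hT : Ma * A = Mb * W := by
      rw [hAdef, ← mul_assoc, hMaMinv, one_mul]
    have hu0 : u 0 = 1 := by
      rw [hudef]
      simp only [pow_zero, one_mul]
      exact hMaMinv
    have huB : ∀ n, ‖u n‖ ≤ (‖Ma‖ * (K0 * ‖Minv‖)) * ρ ^ n := by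
      intro n
      calc ‖u n‖ ≤ ‖Ma‖ * ‖A ^ n * Minv‖ := norm_mul_le _ _
        _ ≤ ‖Ma‖ * ((K0 * ‖Minv‖) * ρ ^ n) :=
            mul_le_mul_of_nonneg_left (hAMn n) (norm_nonneg _)
        _ = (‖Ma‖ * (K0 * ‖Minv‖)) * ρ ^ n := by ring
    have huterm : ∀ n, (Ma - Mb * W) * (A ^ n * Minv) = u n - u (n + 1) := by
      intro n
      rw [hudef]
      simp only
      rw [sub_mul]
      congr 1
      rw [← hT, pow_succ']
      simp only [mul_assoc]
    have hulim : Tendsto u atTop (nhds 0) := by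
      apply squeeze_zero_norm huB
      simpa using (tendsto_pow_atTop_nhds_zero_of_lt_one hρ0.le hρ1).const_mul
        (‖Ma‖ * (K0 * ‖Minv‖))
    have hsum2 : Summable (fun n => u n - u (n + 1)) := by
      apply Summable.of_norm_bounded
        (g := fun n => (2 * (‖Ma‖ * (K0 * ‖Minv‖))) * ρ ^ n) (hgeom.mul_left _)
      intro n
      have h1 := huB n
      have h2 := huB (n + 1)
      have h3 : ρ ^ (n + 1) ≤ ρ ^ n := pow_le_pow_of_le_one hρ0.le hρ1.le (by omega)
      have h4 : (0:ℝ) ≤ ‖Ma‖ * (K0 * ‖Minv‖) := by positivity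
      calc ‖u n - u (n + 1)‖ ≤ ‖u n‖ + ‖u (n + 1)‖ := norm_sub_le _ _
        _ ≤ (2 * (‖Ma‖ * (K0 * ‖Minv‖))) * ρ ^ n := by nlinarith
    have hHS : HasSum (fun n => u n - u (n + 1)) 1 := by
      rw [hsum2.hasSum_iff_tendsto_nat]
      have hps : (fun n => ∑ i ∈ Finset.range n, (u i - u (i + 1)))
          = fun n => u 0 - u n := funext fun n => Finset.sum_range_sub' u n
      have hl : Tendsto (fun n => u 0 - u n) atTop (nhds (u 0 - 0)) :=
        Tendsto.sub tendsto_const_nhds hulim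
      rw [sub_zero, hu0] at hl
      rw [hps, hu0]
      exact hl
    have h1 : HasSum (fun n => (Ma - Mb * W) * (A ^ n * Minv))
        ((Ma - Mb * W) * ∑' n, A ^ n * Minv) := hsum.hasSum.mul_left _
    have h2 : (fun n => (Ma - Mb * W) * (A ^ n * Minv))
        = fun n => u n - u (n + 1) := funext huterm
    rw [h2] at h1
    exact h1.unique hHS
  · -- right inverse identity
    set v : ℕ → (Lp ℂ (ENNReal.ofReal p) (volume.restrict (Set.Ioi 0)) →L[ℂ]
        Lp ℂ (ENNReal.ofReal p) (volume.restrict (Set.Ioi 0))) :=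
      fun n => A ^ n with hvdef
    have hv0 : v 0 = 1 := pow_zero A
    have hvterm : ∀ n, (A ^ n * Minv) * (Ma - Mb * W) = v n - v (n + 1) := by
      intro n
      rw [hvdef]
      simp only
      have e1 : A ^ n * Minv * Ma = A ^ n := by rw [mul_assoc, hMinvMa, mul_one]
      have e2 : A ^ n * Minv * (Mb * W) = A ^ (n + 1) := by
        rw [mul_assoc, ← hAdef, pow_succ]
      rw [mul_sub, e1, e2]
    have hvlim : Tendsto v atTop (nhds 0) := by
      apply squeeze_zero_norm (fun n => by simpa using hAnorm n)
      simpa using (tendsto_pow_atTop_nhds_zero_of_lt_one hρ0.le hρ1).const_mul K0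
    have hsum2 : Summable (fun n => v n - v (n + 1)) := by
      apply Summable.of_norm_bounded (g := fun n => (2 * K0) * ρ ^ n) (hgeom.mul_left _)
      intro n
      have h1 := hAnorm n
      have h2 := hAnorm (n + 1)
      have h3 : ρ ^ (n + 1) ≤ ρ ^ n := pow_le_pow_of_le_one hρ0.le hρ1.le (by omega)
      calc ‖v n - v (n + 1)‖ ≤ ‖v n‖ + ‖v (n + 1)‖ := norm_sub_le _ _
        _ ≤ (2 * K0) * ρ ^ n := by
            simp only [hvdef]
            nlinarith
    have hHS : HasSum (fun n => v n - v (n + 1)) 1 := by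
      rw [hsum2.hasSum_iff_tendsto_nat]
      have hps : (fun n => ∑ i ∈ Finset.range n, (v i - v (i + 1)))
          = fun n => v 0 - v n := funext fun n => Finset.sum_range_sub' v n
      have hl : Tendsto (fun n => v 0 - v n) atTop (nhds (v 0 - 0)) :=
        Tendsto.sub tendsto_const_nhds hvlim
      rw [sub_zero, hv0] at hl
      rw [hps, hv0]
      exact hl
    have h1 : HasSum (fun n => (A ^ n * Minv) * (Ma - Mb * W))
        ((∑' n, A ^ n * Minv) * (Ma - Mb * W)) := hsum.hasSum.mul_right _
    have h2 : (fun n => (A ^ n * Minv) * (Ma - Mb * W))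
        = fun n => v n - v (n + 1) := funext hvterm
    rw [h2] at h1
    exact h1.unique hHS
end

section
/- Let 1 < p < ∞, β ∈ ℂ with Re β ∈ (0,2π), and r_{p,β}(x) = e^{(x+i/p)(π−β)} / sinh(π(x+i/p)) for x ∈ ℝ. Then r_{p,β} is a function of finite total variation on ℝ; in particular sup_x |x + i/p|^j |r_{p,β}(x)| < ∞ and ∫_ℝ |x + i/p|^j |r_{p,β}(x)| dx < ∞ for every nonnegative integer j, and sup_x |coth(π(x+i/p))| < ∞. -/
open Filter Complex MeasureTheory

/-- `r_{p,β}(x) = e^{(x+i/p)(π-β)} / sinh(π(x+i/p))`. -/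
noncomputable def rPB (p : ℝ) (β : ℂ) (x : ℝ) : ℂ :=
  Complex.exp ((x + Complex.I / p) * ((Real.pi : ℂ) - β)) /
    Complex.sinh ((Real.pi : ℂ) * (x + Complex.I / p))

lemma integrable_exp_neg_abs' {δ : ℝ} (hδ : 0 < δ) :
    Integrable (fun x : ℝ => Real.exp (-δ * |x|)) := by
  set g : ℝ → ℝ := fun x => Real.exp (-δ * |x|) with hg
  have h1 : IntegrableOn g (Set.Ioi 0) :=
    (exp_neg_integrableOn_Ioi 0 hδ).congr_fun
      (fun x hx => by rw [hg]; simp [abs_of_pos (Set.mem_Ioi.mp hx)]) measurableSet_Ioi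
  have h1' : IntegrableOn g (Set.Ici 0) := by
    rwa [integrableOn_Ici_iff_integrableOn_Ioi]
  have hind : Integrable (Set.indicator (Set.Ioi (0:ℝ)) g) := by
    rwa [integrable_indicator_iff measurableSet_Ioi]
  have heq : Set.indicator (Set.Iio (0:ℝ)) g = fun x => Set.indicator (Set.Ioi (0:ℝ)) g (-x) := by
    funext x
    by_cases hx : x < 0
    · rw [Set.indicator_of_mem (Set.mem_Iio.mpr hx), Set.indicator_of_mem (by simpa using hx)]
      simp [hg, abs_neg]
    · rw [Set.indicator_of_notMem (by simpa using hx),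
        Set.indicator_of_notMem (by simp; linarith [not_lt.mp hx])]
  have h2 : IntegrableOn g (Set.Iio 0) := by
    rw [← integrable_indicator_iff (measurableSet_Iio : MeasurableSet (Set.Iio (0:ℝ))), heq]
    exact hind.comp_neg
  have : Set.univ = Set.Iio (0:ℝ) ∪ Set.Ici 0 := (Set.Iio_union_Ici).symm
  rw [← integrableOn_univ, this]
  exact h2.union h1'



lemma bv_of_deriv {f f' : ℝ → ℂ} (hd : ∀ x, HasDerivAt f (f' x) x)
    (hc : Continuous f') (hi : Integrable f') :
    BoundedVariationOn f Set.univ := by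
  have key : eVariationOn f Set.univ ≤ ENNReal.ofReal (∫ x, ‖f' x‖) := by
    refine iSup_le ?_
    rintro ⟨n, u, hu, -⟩
    have hFTC : ∀ i : ℕ, f (u (i+1)) - f (u i) = ∫ t in (u i)..(u (i+1)), f' t := fun i =>
      (intervalIntegral.integral_eq_sub_of_hasDerivAt (fun t _ => hd t)
        (hc.intervalIntegrable _ _)).symm
    calc ∑ i ∈ Finset.range n, edist (f (u (i+1))) (f (u i))
        ≤ ∑ i ∈ Finset.range n, ENNReal.ofReal (∫ t in (u i)..(u (i+1)), ‖f' t‖) := by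
          refine Finset.sum_le_sum fun i _ => ?_
          rw [edist_dist, dist_eq_norm, hFTC i]
          exact ENNReal.ofReal_le_ofReal
            (intervalIntegral.norm_integral_le_integral_norm (hu (Nat.le_succ i)))
      _ = ENNReal.ofReal (∑ i ∈ Finset.range n, ∫ t in (u i)..(u (i+1)), ‖f' t‖) := by
          rw [ENNReal.ofReal_sum_of_nonneg]
          intro i _
          exact intervalIntegral.integral_nonneg (hu (Nat.le_succ i)) (fun t _ => norm_nonneg _)
      _ = ENNReal.ofReal (∫ t in (u 0)..(u n), ‖f' t‖) := by
          congr 1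
          exact intervalIntegral.sum_integral_adjacent_intervals
            (fun i _ => (hc.norm.intervalIntegrable _ _))
      _ ≤ ENNReal.ofReal (∫ t, ‖f' t‖) := by
          apply ENNReal.ofReal_le_ofReal
          rw [intervalIntegral.integral_of_le (hu (Nat.zero_le n))]
          exact setIntegral_le_integral hi.norm
            (Filter.Eventually.of_forall fun t => norm_nonneg _)
  exact ne_top_of_le_ne_top ENNReal.ofReal_ne_top key

section
variable {p : ℝ} {β : ℂ}

lemma hp0 (hp : 1 < p) : 0 < p := lt_trans one_pos hp

lemma sin_pos (hp : 1 < p) : 0 < Real.sin (Real.pi / p) :=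
  Real.sin_pos_of_pos_of_lt_pi (div_pos Real.pi_pos (hp0 hp))
    (div_lt_self Real.pi_pos hp)

lemma arg_decomp (hp : 1 < p) (x : ℝ) : (Real.pi : ℂ) * ((x:ℂ) + I/p) =
    ((Real.pi * x : ℝ) : ℂ) + ((Real.pi / p : ℝ) : ℂ) * I := by
  have : (p : ℂ) ≠ 0 := Complex.ofReal_ne_zero.mpr (hp0 hp).ne'
  push_cast; field_simp

lemma sinh_decomp (hp : 1 < p) (x : ℝ) :
    Complex.sinh ((Real.pi : ℂ) * ((x:ℂ) + I/p)) =
    ((Real.sinh (Real.pi*x) * Real.cos (Real.pi/p) : ℝ) : ℂ) +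
      ((Real.cosh (Real.pi*x) * Real.sin (Real.pi/p) : ℝ) : ℂ) * I := by
  rw [arg_decomp hp, Complex.sinh_add, Complex.sinh_mul_I, Complex.cosh_mul_I]
  push_cast [Complex.ofReal_sinh, Complex.ofReal_cosh, Complex.ofReal_sin, Complex.ofReal_cos]
  ring

lemma cosh_decomp (hp : 1 < p) (x : ℝ) :
    Complex.cosh ((Real.pi : ℂ) * ((x:ℂ) + I/p)) =
    ((Real.cosh (Real.pi*x) * Real.cos (Real.pi/p) : ℝ) : ℂ) +
      ((Real.sinh (Real.pi*x) * Real.sin (Real.pi/p) : ℝ) : ℂ) * I := by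
  rw [arg_decomp hp, Complex.cosh_add, Complex.sinh_mul_I, Complex.cosh_mul_I]
  push_cast [Complex.ofReal_sinh, Complex.ofReal_cosh, Complex.ofReal_sin, Complex.ofReal_cos]
  ring

lemma sinh_lower (hp : 1 < p) (x : ℝ) :
    Real.sin (Real.pi/p) * Real.cosh (Real.pi*x) ≤
      ‖Complex.sinh ((Real.pi : ℂ) * ((x:ℂ) + I/p))‖ := by
  rw [sinh_decomp hp]
  have h := Complex.abs_im_le_norm (((Real.sinh (Real.pi*x) * Real.cos (Real.pi/p) : ℝ) : ℂ) +
      ((Real.cosh (Real.pi*x) * Real.sin (Real.pi/p) : ℝ) : ℂ) * I)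
  simp only [Complex.add_im, Complex.ofReal_im, Complex.mul_im, Complex.ofReal_re,
    Complex.I_im, Complex.I_re, mul_zero, mul_one, zero_add, zero_mul, add_zero] at h
  refine le_trans (le_of_eq ?_) h
  rw [_root_.abs_of_nonneg (mul_nonneg (Real.cosh_pos _).le (sin_pos hp).le), mul_comm]

lemma sinh_pos_abs (hp : 1 < p) (x : ℝ) :
    0 < ‖Complex.sinh ((Real.pi : ℂ) * ((x:ℂ) + I/p))‖ :=
  lt_of_lt_of_le (mul_pos (sin_pos hp) (Real.cosh_pos _)) (sinh_lower hp x)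

lemma sinh_ne (hp : 1 < p) (x : ℝ) :
    Complex.sinh ((Real.pi : ℂ) * ((x:ℂ) + I/p)) ≠ 0 := by
  intro h
  have := sinh_pos_abs hp x
  rw [h] at this; simp at this

lemma cosh_upper (hp : 1 < p) (x : ℝ) :
    ‖Complex.cosh ((Real.pi : ℂ) * ((x:ℂ) + I/p))‖ ≤ Real.cosh (Real.pi*x) := by
  rw [cosh_decomp hp, Complex.norm_def, Complex.normSq_add_mul_I]
  have h1 : Real.sinh (Real.pi*x) ^ 2 + 1 = Real.cosh (Real.pi*x) ^ 2 :=
    (Real.cosh_sq (Real.pi*x)).symm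
  have h2 : Real.sin (Real.pi/p) ^ 2 + Real.cos (Real.pi/p) ^ 2 = 1 :=
    Real.sin_sq_add_cos_sq _
  have hineq : (Real.cosh (Real.pi*x) * Real.cos (Real.pi/p))^2 +
      (Real.sinh (Real.pi*x) * Real.sin (Real.pi/p))^2 ≤ (Real.cosh (Real.pi*x))^2 := by
    nlinarith [sq_nonneg (Real.sin (Real.pi/p)), sq_nonneg (Real.cos (Real.pi/p))]
  calc Real.sqrt ((Real.cosh (Real.pi*x) * Real.cos (Real.pi/p))^2 +
        (Real.sinh (Real.pi*x) * Real.sin (Real.pi/p))^2)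
      ≤ Real.sqrt ((Real.cosh (Real.pi*x))^2) := Real.sqrt_le_sqrt hineq
    _ = Real.cosh (Real.pi*x) := Real.sqrt_sq (Real.cosh_pos _).le

lemma coth_bound (hp : 1 < p) (x : ℝ) :
    ‖Complex.cosh ((Real.pi : ℂ) * ((x:ℂ) + I/p)) /
      Complex.sinh ((Real.pi : ℂ) * ((x:ℂ) + I/p))‖ ≤ (Real.sin (Real.pi/p))⁻¹ := by
  rw [norm_div, div_le_iff₀ (sinh_pos_abs hp x)]
  calc ‖Complex.cosh ((Real.pi : ℂ) * ((x:ℂ) + I/p))‖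
      ≤ Real.cosh (Real.pi*x) := cosh_upper hp x
    _ = (Real.sin (Real.pi/p))⁻¹ * (Real.sin (Real.pi/p) * Real.cosh (Real.pi*x)) := by
        rw [inv_mul_cancel_left₀ (sin_pos hp).ne']
    _ ≤ (Real.sin (Real.pi/p))⁻¹ * ‖Complex.sinh ((Real.pi : ℂ) * ((x:ℂ) + I/p))‖ :=
        mul_le_mul_of_nonneg_left (sinh_lower hp x) (inv_nonneg.mpr (sin_pos hp).le)

lemma num_abs (hp : 1 < p) (x : ℝ) :
    ‖Complex.exp (((x:ℂ) + I/p) * ((Real.pi : ℂ) - β))‖ =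
      Real.exp ((Real.pi - β.re)*x + β.im/p) := by
  have hpne : p ≠ 0 := (hp0 hp).ne'
  rw [Complex.norm_exp]
  congr 1
  have hz : (x:ℂ) + I/(p:ℂ) = (x:ℂ) + ((p⁻¹ : ℝ):ℂ)*I := by push_cast; ring
  rw [hz]
  simp [Complex.mul_re, Complex.add_re, Complex.add_im, Complex.sub_re, Complex.sub_im,
    Complex.mul_im]
  field_simp

lemma cosh_lower_exp (t : ℝ) : Real.exp |t| ≤ 2 * Real.cosh t := by
  rw [Real.cosh_eq]
  rcases abs_cases t with ⟨h1, _⟩ | ⟨h1, _⟩ <;> rw [h1] <;>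
    [linarith [Real.exp_pos (-t)]; linarith [Real.exp_pos t]]

lemma rPB_le (hp : 1 < p) (hβ : β.re ∈ Set.Ioo 0 (2 * Real.pi)) (x : ℝ) :
    ‖rPB p β x‖ ≤
      (2 * Real.exp (β.im/p) / Real.sin (Real.pi/p)) *
        Real.exp (-(min β.re (2*Real.pi - β.re)) * |x|) := by
  set s := Real.sin (Real.pi/p) with hs
  set δ := min β.re (2*Real.pi - β.re) with hδdef
  have hspos : 0 < s := sin_pos hp
  have step1 : ‖rPB p β x‖ ≤
      Real.exp ((Real.pi - β.re)*x + β.im/p) / (s * Real.cosh (Real.pi*x)) := by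
    rw [rPB, norm_div, num_abs hp]
    exact div_le_div_of_nonneg_left (Real.exp_nonneg _)
      (mul_pos hspos (Real.cosh_pos _)) (sinh_lower hp x)
  refine step1.trans ?_
  rw [div_le_iff₀ (mul_pos hspos (Real.cosh_pos _))]
  have hexp : Real.exp ((Real.pi - β.re)*x + β.im/p) ≤
      (Real.exp (β.im/p) * Real.exp (-δ * |x|)) * Real.exp (Real.pi * |x|) := by
    rw [← Real.exp_add, ← Real.exp_add, Real.exp_le_exp]
    rcases abs_cases x with ⟨h1, h2⟩ | ⟨h1, h2⟩ <;> rw [h1]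
    · nlinarith [min_le_left β.re (2*Real.pi - β.re)]
    · nlinarith [min_le_right β.re (2*Real.pi - β.re)]
  have hcosh2 : Real.exp (Real.pi * |x|) ≤ 2 * Real.cosh (Real.pi * x) := by
    have := cosh_lower_exp (Real.pi * x)
    rwa [abs_mul, _root_.abs_of_nonneg Real.pi_pos.le] at this
  calc Real.exp ((Real.pi - β.re)*x + β.im/p)
      ≤ (Real.exp (β.im/p) * Real.exp (-δ * |x|)) * Real.exp (Real.pi * |x|) := hexp
    _ ≤ (Real.exp (β.im/p) * Real.exp (-δ * |x|)) * (2 * Real.cosh (Real.pi * x)) :=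
        mul_le_mul_of_nonneg_left hcosh2 (by positivity)
    _ = 2 * Real.exp (β.im/p) / s * Real.exp (-δ * |x|) * (s * Real.cosh (Real.pi*x)) := by
        field_simp

lemma poly_bound {δ : ℝ} (hδ : 0 < δ) (j : ℕ) (t : ℝ) (ht : 0 ≤ t) :
    (t+1)^j * Real.exp (-δ*t) ≤
      ((j.factorial : ℝ) * (2/δ)^j * Real.exp (δ/2)) * Real.exp (-(δ/2)*t) := by
  have h1 : ((δ/2)*(t+1))^j / (j.factorial : ℝ) ≤ Real.exp ((δ/2)*(t+1)) :=
    Real.pow_div_factorial_le_exp (x := (δ/2)*(t+1)) (by positivity) j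
  have hfac : (0:ℝ) < (j.factorial : ℝ) := by positivity
  have h2 : (t+1)^j ≤ (j.factorial : ℝ) * (2/δ)^j * Real.exp ((δ/2)*(t+1)) := by
    have h3 := (div_le_iff₀ hfac).mp h1
    calc (t+1)^j = ((δ/2)*(t+1))^j * (2/δ)^j := by
          rw [← mul_pow]
          congr 1
          field_simp
      _ ≤ (Real.exp ((δ/2)*(t+1)) * (j.factorial : ℝ)) * (2/δ)^j :=
          mul_le_mul_of_nonneg_right h3 (by positivity)
      _ = (j.factorial : ℝ) * (2/δ)^j * Real.exp ((δ/2)*(t+1)) := by ring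
  calc (t+1)^j * Real.exp (-δ*t)
      ≤ ((j.factorial : ℝ) * (2/δ)^j * Real.exp ((δ/2)*(t+1))) * Real.exp (-δ*t) :=
        mul_le_mul_of_nonneg_right h2 (Real.exp_nonneg _)
    _ = ((j.factorial : ℝ) * (2/δ)^j * Real.exp (δ/2)) * Real.exp (-(δ/2)*t) := by
        rw [mul_assoc, mul_assoc, ← Real.exp_add,
          show δ/2*(t+1) + -δ*t = δ/2 + -(δ/2)*t from by ring, Real.exp_add]
        ring

end

section
variable {p : ℝ} {β : ℂ}

lemma rPB_cont (hp : 1 < p) : Continuous (rPB p β) := by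
  apply Continuous.div
  · exact Complex.continuous_exp.comp
      ((Complex.continuous_ofReal.add continuous_const).mul continuous_const)
  · exact Complex.continuous_sinh.comp
      (continuous_const.mul (Complex.continuous_ofReal.add continuous_const))
  · exact fun x => sinh_ne hp x

lemma coth_cont (hp : 1 < p) : Continuous (fun x : ℝ =>
    Complex.cosh ((Real.pi:ℂ) * ((x:ℂ) + I/p)) /
      Complex.sinh ((Real.pi:ℂ) * ((x:ℂ) + I/p))) := by
  apply Continuous.div
  · exact Complex.continuous_cosh.comp
      (continuous_const.mul (Complex.continuous_ofReal.add continuous_const))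
  · exact Complex.continuous_sinh.comp
      (continuous_const.mul (Complex.continuous_ofReal.add continuous_const))
  · exact fun x => sinh_ne hp x

lemma rPB_hasDerivAt (hp : 1 < p) (x : ℝ) :
    HasDerivAt (rPB p β)
      (rPB p β x * (((Real.pi:ℂ) - β) - (Real.pi:ℂ) *
        (Complex.cosh ((Real.pi:ℂ) * ((x:ℂ) + I/p)) /
         Complex.sinh ((Real.pi:ℂ) * ((x:ℂ) + I/p))))) x := by
  have hN : HasDerivAt (fun w : ℂ => Complex.exp ((w + I/p) * ((Real.pi:ℂ) - β)))
      (Complex.exp (((x:ℂ) + I/p) * ((Real.pi:ℂ) - β)) * ((Real.pi:ℂ) - β)) (x:ℂ) := by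
    have h1 : HasDerivAt (fun w : ℂ => (w + I/p) * ((Real.pi:ℂ) - β)) ((Real.pi:ℂ) - β) (x:ℂ) := by
      simpa using ((hasDerivAt_id ((x:ℂ))).add_const (I/p)).mul_const ((Real.pi:ℂ) - β)
    simpa using h1.cexp
  have hD : HasDerivAt (fun w : ℂ => Complex.sinh ((Real.pi:ℂ) * (w + I/p)))
      (Complex.cosh ((Real.pi:ℂ) * ((x:ℂ) + I/p)) * (Real.pi:ℂ)) (x:ℂ) := by
    have h1 : HasDerivAt (fun w : ℂ => (Real.pi:ℂ) * (w + I/p)) ((Real.pi:ℂ)) (x:ℂ) := by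
      simpa using ((hasDerivAt_id ((x:ℂ))).add_const (I/p)).const_mul ((Real.pi:ℂ))
    simpa using h1.csinh
  have hQ := (hN.div hD (sinh_ne hp x)).comp_ofReal
  convert hQ using 1
  · rfl
  have h0 := sinh_ne hp x
  unfold rPB
  generalize Complex.sinh ((Real.pi:ℂ) * ((x:ℂ) + I/p)) = S at h0 ⊢
  field_simp

end


theorem rPB_finite_total_variation (p : ℝ) (hp : 1 < p)
    (β : ℂ) (hβ : β.re ∈ Set.Ioo 0 (2 * Real.pi)) :
    BoundedVariationOn (rPB p β) Set.univ ∧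
    (∀ j : ℕ,
      (∃ C, ∀ x : ℝ, ‖(x : ℂ) + Complex.I / p‖ ^ j *
          ‖rPB p β x‖ ≤ C) ∧
      Integrable (fun x : ℝ => ‖(x : ℂ) + Complex.I / p‖ ^ j *
          ‖rPB p β x‖)) ∧
    (∃ C, ∀ x : ℝ,
      ‖Complex.cosh ((Real.pi : ℂ) * (x + Complex.I / p)) /
        Complex.sinh ((Real.pi : ℂ) * (x + Complex.I / p))‖ ≤ C) := by
  obtain ⟨hβ1, hβ2⟩ := hβ
  have hspos : 0 < Real.sin (Real.pi/p) := sin_pos hp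
  set s : ℝ := Real.sin (Real.pi/p) with hs
  set δ : ℝ := min β.re (2*Real.pi - β.re) with hδdef
  have hδ : 0 < δ := lt_min hβ1 (by linarith)
  set K : ℝ := 2 * Real.exp (β.im/p) / s with hK
  have hKpos : 0 < K := by positivity
  have hbound : ∀ x : ℝ, ‖rPB p β x‖ ≤ K * Real.exp (-δ * |x|) :=
    fun x => rPB_le hp ⟨hβ1, hβ2⟩ x
  set f' : ℝ → ℂ := fun x => rPB p β x * (((Real.pi:ℂ) - β) - (Real.pi:ℂ) *
      (Complex.cosh ((Real.pi:ℂ) * ((x:ℂ) + I/p)) /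
       Complex.sinh ((Real.pi:ℂ) * ((x:ℂ) + I/p)))) with hf'
  have hf'cont : Continuous f' :=
    (rPB_cont hp).mul (continuous_const.sub (continuous_const.mul (coth_cont hp)))
  set M : ℝ := K * (‖(Real.pi:ℂ) - β‖ + Real.pi * s⁻¹) with hM
  have hf'bound : ∀ x : ℝ, ‖f' x‖ ≤ M * Real.exp (-δ * |x|) := by
    intro x
    have h1 : ‖(((Real.pi:ℂ) - β)) - (Real.pi:ℂ) *
        (Complex.cosh ((Real.pi:ℂ) * ((x:ℂ) + I/p)) /
         Complex.sinh ((Real.pi:ℂ) * ((x:ℂ) + I/p)))‖ ≤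
        ‖(Real.pi:ℂ) - β‖ + Real.pi * s⁻¹ := by
      calc ‖(((Real.pi:ℂ) - β)) - (Real.pi:ℂ) *
            (Complex.cosh ((Real.pi:ℂ) * ((x:ℂ) + I/p)) /
             Complex.sinh ((Real.pi:ℂ) * ((x:ℂ) + I/p)))‖
          ≤ ‖(Real.pi:ℂ) - β‖ + ‖(Real.pi:ℂ) *
            (Complex.cosh ((Real.pi:ℂ) * ((x:ℂ) + I/p)) /
             Complex.sinh ((Real.pi:ℂ) * ((x:ℂ) + I/p)))‖ := by
            simpa using norm_sub_le (((Real.pi:ℂ) - β))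
              ((Real.pi:ℂ) * (Complex.cosh ((Real.pi:ℂ) * ((x:ℂ) + I/p)) /
               Complex.sinh ((Real.pi:ℂ) * ((x:ℂ) + I/p))))
        _ ≤ ‖(Real.pi:ℂ) - β‖ + Real.pi * s⁻¹ := by
            gcongr
            rw [norm_mul, Complex.norm_real, Real.norm_eq_abs, _root_.abs_of_pos Real.pi_pos]
            exact mul_le_mul_of_nonneg_left (coth_bound hp x) Real.pi_pos.le
    calc ‖f' x‖ = ‖rPB p β x‖ * ‖(((Real.pi:ℂ) - β)) - (Real.pi:ℂ) *
          (Complex.cosh ((Real.pi:ℂ) * ((x:ℂ) + I/p)) /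
           Complex.sinh ((Real.pi:ℂ) * ((x:ℂ) + I/p)))‖ := by
          rw [hf']; simp only [norm_mul]
      _ ≤ (K * Real.exp (-δ * |x|)) * (‖(Real.pi:ℂ) - β‖ + Real.pi * s⁻¹) :=
          mul_le_mul (hbound x) h1 (norm_nonneg _) (by positivity)
      _ = M * Real.exp (-δ * |x|) := by rw [hM]; ring
  have hf'int : Integrable f' := by
    refine Integrable.mono' (((integrable_exp_neg_abs' hδ).const_mul M)) 
      hf'cont.aestronglyMeasurable (Filter.Eventually.of_forall fun x => ?_)
    exact hf'bound x
  refine ⟨?_, ?_, ⟨s⁻¹, fun x => coth_bound hp x⟩⟩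
  · exact bv_of_deriv (fun x => rPB_hasDerivAt hp x) hf'cont hf'int
  · intro j
    set Cj : ℝ := (j.factorial : ℝ) * (2/δ)^j * Real.exp (δ/2) with hCj
    have hCjpos : 0 < Cj := by positivity
    have habsz : ∀ x : ℝ, ‖(x : ℂ) + Complex.I / p‖ ≤ |x| + 1 := by
      intro x
      calc ‖(x : ℂ) + Complex.I / p‖
          ≤ ‖(x : ℂ)‖ + ‖Complex.I / p‖ := norm_add_le _ _
        _ = |x| + 1/p := by
            rw [Complex.norm_real, Real.norm_eq_abs, norm_div, Complex.norm_I, Complex.norm_real, Real.norm_eq_abs,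
              _root_.abs_of_pos (hp0 hp)]
        _ ≤ |x| + 1 := by
            have : 1/p ≤ 1 := by
              rw [div_le_one (hp0 hp)]; exact hp.le
            linarith
    have hmom : ∀ x : ℝ, ‖(x : ℂ) + Complex.I / p‖ ^ j *
        ‖rPB p β x‖ ≤ (K * Cj) * Real.exp (-(δ/2) * |x|) := by
      intro x
      calc ‖(x : ℂ) + Complex.I / p‖ ^ j * ‖rPB p β x‖
          ≤ (|x| + 1) ^ j * (K * Real.exp (-δ * |x|)) :=
            mul_le_mul (pow_le_pow_left₀ (norm_nonneg _) (habsz x) j)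
              (hbound x) (norm_nonneg _) (by positivity)
        _ = K * ((|x| + 1) ^ j * Real.exp (-δ * |x|)) := by ring
        _ ≤ K * (Cj * Real.exp (-(δ/2) * |x|)) :=
            mul_le_mul_of_nonneg_left (poly_bound hδ j |x| (abs_nonneg x)) hKpos.le
        _ = (K * Cj) * Real.exp (-(δ/2) * |x|) := by ring
    have hcontm : Continuous (fun x : ℝ => ‖(x : ℂ) + Complex.I / p‖ ^ j *
        ‖rPB p β x‖) := by
      apply Continuous.mul
      · exact (continuous_norm.comp
          (Complex.continuous_ofReal.add continuous_const)).pow j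
      · exact continuous_norm.comp (rPB_cont hp)
    constructor
    · refine ⟨K * Cj, fun x => ?_⟩
      calc ‖(x : ℂ) + Complex.I / p‖ ^ j * ‖rPB p β x‖
          ≤ (K * Cj) * Real.exp (-(δ/2) * |x|) := hmom x
        _ ≤ (K * Cj) * 1 := by
            refine mul_le_mul_of_nonneg_left ?_ (by positivity)
            rw [Real.exp_le_one_iff]
            have : 0 ≤ |x| := abs_nonneg x
            nlinarith
        _ = K * Cj := mul_one _
    · refine Integrable.mono' ((integrable_exp_neg_abs' (half_pos hδ)).const_mul (K * Cj))
        hcontm.aestronglyMeasurable (Filter.Eventually.of_forall fun x => ?_)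
      rw [Real.norm_eq_abs, _root_.abs_of_nonneg (by positivity)]
      have := hmom x
      calc ‖(x : ℂ) + Complex.I / p‖ ^ j * ‖rPB p β x‖
          ≤ (K * Cj) * Real.exp (-(δ/2) * |x|) := hmom x
        _ = (K * Cj) * Real.exp (-(δ/2) * |x|) := rfl
end
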